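/- arXiv:1705.05062 — 4 statements merged into one kernel-verified Lean document; each statement's English description precedes it below -/
import Mathlib

section
/- Sequences a_1, ..., a_n over a commutative ring R with involution * are complementary with weight w if and only if Σ_{i=1}^n ψ_{a_i}(x) ψ_{a_i}*(x) = w, where ψ_a(x) = x^{1−l} φ_a(x²) for a of length l. -/
noncomputable section
open LaurentPolynomial Finset

variable {R : Type*}

/-- The Hall polynomial `φ_a(x) = Σ aᵢ xⁱ` of a sequence. -/
def hallPhi [CommRing R] {l : ℕ} (a : Fin l → R) : LaurentPolynomial R :=
  ∑ i, C (a i) * T (i : ℤ)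

/-- `ψ_a(x) = x^{1-l} φ_a(x²) = Σ aᵢ x^{2i+1-l}`. -/
def hallPsi [CommRing R] {l : ℕ} (a : Fin l → R) : LaurentPolynomial R :=
  ∑ i, C (a i) * T (2 * (i : ℤ) + 1 - l)

/-- Extension of an involution `σ` on `R` to Laurent polynomials, sending `x ↦ x⁻¹`. -/
def lstar [CommRing R] (σ : R →+* R) (f : LaurentPolynomial R) : LaurentPolynomial R :=
  AddMonoidAlgebra.ofCoeff (Finsupp.equivMapDomain (Equiv.neg ℤ) (Finsupp.mapRange σ σ.map_zero f.coeff))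

/-- Non-periodic autocorrelation `N_a(j) = Σ_{i=0}^{l-j-1} aᵢ σ(a_{i+j})`. -/
def autocorr [CommRing R] (σ : R → R) {l : ℕ} (a : Fin l → R) (j : ℕ) : R :=
  ∑ i : Fin l, if h : (i : ℕ) + j < l then a i * σ (a ⟨(i : ℕ) + j, h⟩) else 0

/-- Reversed conjugated sequence `a* = (σ a_{l-1},…,σ a₀)`. -/
def revSeq (σ : R → R) {l : ℕ} (a : Fin l → R) : Fin l → R :=
  fun i => σ (a i.rev)

/-- Substitution `x ↦ x²` on Laurent polynomials. -/
def subSq [CommRing R] : LaurentPolynomial R →+* LaurentPolynomial R :=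
  AddMonoidAlgebra.mapDomainRingHom R ((2 : ℤ) • AddMonoidHom.id ℤ)

/-- Laurent polynomials in two variables `x, y`. -/
abbrev Laurent2 (R : Type*) [CommRing R] := AddMonoidAlgebra R (ℤ × ℤ)

/-- A single-variable `ψ_a(x)` viewed in the two-variable ring. -/
def psiX [CommRing R] {l : ℕ} (a : Fin l → R) : Laurent2 R :=
  ∑ i : Fin l, AddMonoidAlgebra.single ((2 * (i : ℤ) + 1 - l, (0 : ℤ)) : ℤ × ℤ) (a i)

/-- A single-variable `ψ_a(y)` viewed in the two-variable ring. -/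
def psiY [CommRing R] {l : ℕ} (a : Fin l → R) : Laurent2 R :=
  ∑ i : Fin l, AddMonoidAlgebra.single (((0 : ℤ), 2 * (i : ℤ) + 1 - l) : ℤ × ℤ) (a i)

/-- `ψ_A(x,y) = Σᵢ ψ_{aᵢ}(x) y^{2i+1-m}` for a matrix `A` with rows `aᵢ`. -/
def psiMat [CommRing R] {m n : ℕ} (A : Fin m → Fin n → R) : Laurent2 R :=
  ∑ i : Fin m, psiX (A i) * AddMonoidAlgebra.single (((0 : ℤ), 2 * (i : ℤ) + 1 - m) : ℤ × ℤ) (1 : R)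

/-- Involution on two-variable Laurent polynomials: `x ↦ x⁻¹`, `y ↦ y⁻¹`, `σ` on coefficients. -/
def lstar2 [CommRing R] (σ : R →+* R) (f : Laurent2 R) : Laurent2 R :=
  AddMonoidAlgebra.ofCoeff (Finsupp.equivMapDomain (Equiv.neg (ℤ × ℤ)) (Finsupp.mapRange σ σ.map_zero f.coeff))

/-- Outer product matrix `(f^t a)_{ij} = fᵢ aⱼ`. -/
def outer [CommRing R] {m n : ℕ} (f : Fin m → R) (a : Fin n → R) : Fin m → Fin n → R :=
  fun i j => f i * a j

/-- Concatenation of the rows of a matrix. -/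
def seqMat [CommRing R] {m n : ℕ} (A : Fin m → Fin n → R) : Fin (m * n) → R :=
  fun k =>
    A ⟨(k : ℕ) / n, Nat.div_lt_of_lt_mul (Nat.mul_comm m n ▸ k.isLt)⟩
      ⟨(k : ℕ) % n, Nat.mod_lt _ (Nat.pos_of_ne_zero (by rintro rfl; exact absurd k.isLt (by simp)))⟩

/-- The substitution `y = xⁿ`, as an additive monoid hom on exponents. -/
def specHom (n : ℕ) : (ℤ × ℤ) →+ ℤ :=
  AddMonoidHom.fst ℤ ℤ + (n : ℤ) • AddMonoidHom.snd ℤ ℤ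

/-- Substituting `y = xⁿ` in a two-variable Laurent polynomial. -/
def specialize [CommRing R] (n : ℕ) : Laurent2 R →+* LaurentPolynomial R :=
  AddMonoidAlgebra.mapDomainRingHom R (specHom n)

/-- `a/0 = (a₀,0,a₁,…,0,a_l)`, interleaving zeros (length `2l+1` from length `l+1`). -/
def div0 [CommRing R] {l : ℕ} (a : Fin (l + 1) → R) : Fin (2 * l + 1) → R :=
  fun i => if h : (i : ℕ) % 2 = 0 then a ⟨(i : ℕ) / 2, by have := i.isLt; omega⟩ else 0

/-- `0/a = (0,a₀,0,…,a_{l-1},0)` (length `2l+1` from length `l`). -/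
def zdiv [CommRing R] {l : ℕ} (a : Fin l → R) : Fin (2 * l + 1) → R :=
  fun i => if h : (i : ℕ) % 2 = 1 then a ⟨(i : ℕ) / 2, by have := i.isLt; omega⟩ else 0

/-- `a/0` for arbitrary length `l`, giving length `2l-1`. -/
def interDiv0 [CommRing R] {l : ℕ} (a : Fin l → R) : Fin (2 * l - 1) → R :=
  fun i => if h : (i : ℕ) % 2 = 0 then a ⟨(i : ℕ) / 2, by have := i.isLt; omega⟩ else 0

/-- `0/a` for arbitrary length `l`, giving length `2l+1`. -/
def interZero [CommRing R] {l : ℕ} (a : Fin l → R) : Fin (2 * l + 1) → R :=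
  fun i => if h : (i : ℕ) % 2 = 1 then a ⟨(i : ℕ) / 2, by have := i.isLt; omega⟩ else 0

/-- Substitution doubling all exponents, on two-variable Laurent polynomials. -/
def subSq2 [CommRing R] : Laurent2 R →+* Laurent2 R :=
  AddMonoidAlgebra.mapDomainRingHom R ((2 : ℤ) • AddMonoidHom.id (ℤ × ℤ))



section Aux

variable [CommRing R]

lemma lstar_apply' (σ : R →+* R) (f : LaurentPolynomial R) (n : ℤ) :
    (lstar σ f).coeff n = σ (f.coeff (-n)) := rfl

lemma sum_ite_fin {l m : ℕ} (X : Fin l → R) :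
    (∑ q : Fin l, if (q : ℕ) = m then X q else 0) = if h : m < l then X ⟨m, h⟩ else 0 := by
  split_ifs with h
  · rw [Finset.sum_eq_single (⟨m, h⟩ : Fin l)]
    · simp
    · intro q _ hq
      exact if_neg fun hc => hq (Fin.ext hc)
    · simp
  · exact Finset.sum_eq_zero fun q _ => if_neg (by omega)

lemma hallPsi_single {l : ℕ} (a : Fin l → R) :
    hallPsi a = ∑ p : Fin l, AddMonoidAlgebra.single (2 * ((p : ℕ) : ℤ) + 1 - l) (a p) := by
  unfold hallPsi
  refine Finset.sum_congr rfl fun p _ => ?_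
  rw [single_eq_C_mul_T]

lemma lstar_hallPsi (σ : R →+* R) {l : ℕ} (a : Fin l → R) :
    lstar σ (hallPsi a)
      = ∑ q : Fin l, AddMonoidAlgebra.single ((l : ℤ) - (2 * ((q : ℕ) : ℤ) + 1)) (σ (a q)) := by
  ext n
  rw [lstar_apply', hallPsi_single, AddMonoidAlgebra.coeff_sum, AddMonoidAlgebra.coeff_sum,
    Finset.sum_apply', Finset.sum_apply', map_sum]
  refine Finset.sum_congr rfl fun q _ => ?_
  rw [AddMonoidAlgebra.coeff_single, AddMonoidAlgebra.coeff_single,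
    Finsupp.single_apply, Finsupp.single_apply, apply_ite σ, map_zero]
  exact if_congr (by omega) rfl rfl

lemma psi_mul_lstar (σ : R →+* R) {l : ℕ} (a : Fin l → R) :
    hallPsi a * lstar σ (hallPsi a)
      = ∑ p : Fin l, ∑ q : Fin l,
          AddMonoidAlgebra.single (2 * ((p : ℕ) : ℤ) - 2 * ((q : ℕ) : ℤ)) (a p * σ (a q)) := by
  rw [lstar_hallPsi, hallPsi_single, Finset.sum_mul_sum]
  refine Finset.sum_congr rfl fun p _ => Finset.sum_congr rfl fun q _ => ?_
  rw [AddMonoidAlgebra.single_mul_single]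
  congr 1
  ring

end Aux

/-- complementarity with weight `w` iff `Σ ψ_{aᵢ} ψ_{aᵢ}* = w`. -/
theorem stmt5 {R : Type*} [CommRing R] (σ : R ≃+* R) (hσ : ∀ r, σ (σ r) = r)
    (k : ℕ) (l : Fin k → ℕ) (a : (i : Fin k) → Fin (l i) → R) (w : R) :
    ((∑ i, autocorr (fun r => σ r) (a i) 0 = w) ∧
        ∀ j : ℕ, 1 ≤ j → ∑ i, autocorr (fun r => σ r) (a i) j = 0)
      ↔ ∑ i, hallPsi (a i) * lstar (σ : R →+* R) (hallPsi (a i)) = C w := by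
  classical
  set g : ℤ → R := fun n => ∑ i, ∑ p : Fin (l i), ∑ q : Fin (l i),
      if 2 * ((p : ℕ) : ℤ) - 2 * ((q : ℕ) : ℤ) = n then a i p * σ (a i q) else 0 with hg
  have hF : ∀ n : ℤ,
      (∑ i, hallPsi (a i) * lstar (σ : R →+* R) (hallPsi (a i))).coeff n = g n := by
    intro n
    rw [AddMonoidAlgebra.coeff_sum, Finset.sum_apply']
    refine Finset.sum_congr rfl fun i _ => ?_
    rw [psi_mul_lstar, AddMonoidAlgebra.coeff_sum, Finset.sum_apply']
    refine Finset.sum_congr rfl fun p _ => ?_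
    rw [AddMonoidAlgebra.coeff_sum, Finset.sum_apply']
    refine Finset.sum_congr rfl fun q _ => ?_
    rw [AddMonoidAlgebra.coeff_single, Finsupp.single_apply]
    rfl
  have hauto : ∀ j : ℕ, g (-(2 * (j : ℤ))) = ∑ i, autocorr (fun r => σ r) (a i) j := by
    intro j
    refine Finset.sum_congr rfl fun i _ => ?_
    unfold autocorr
    refine Finset.sum_congr rfl fun p _ => ?_
    have : (∑ q : Fin (l i),
        if 2 * ((p : ℕ) : ℤ) - 2 * ((q : ℕ) : ℤ) = -(2 * (j : ℤ)) then a i p * σ (a i q) else 0)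
        = ∑ q : Fin (l i), if (q : ℕ) = (p : ℕ) + j then a i p * σ (a i q) else 0 := by
      refine Finset.sum_congr rfl fun q _ => if_congr (by omega) rfl rfl
    rw [this, sum_ite_fin (fun q : Fin (l i) => a i p * σ (a i q))]
  have hsymm : ∀ n : ℤ, σ (g (-n)) = g n := by
    intro n
    simp only [hg, map_sum, apply_ite σ, map_mul, map_zero, hσ]
    refine Finset.sum_congr rfl fun i _ => ?_
    rw [Finset.sum_comm]
    exact Finset.sum_congr rfl fun q _ => Finset.sum_congr rfl fun p _ =>
      if_congr (by omega) (mul_comm _ _) rfl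
  have hodd : ∀ n : ℤ, n % 2 ≠ 0 → g n = 0 := by
    intro n hn
    refine Finset.sum_eq_zero fun i _ => Finset.sum_eq_zero fun p _ =>
      Finset.sum_eq_zero fun q _ => if_neg (by omega)
  have hCw : ∀ n : ℤ, (C w : LaurentPolynomial R).coeff n = if (0 : ℤ) = n then w else 0 := by
    intro n
    rw [← single_eq_C, AddMonoidAlgebra.coeff_single, Finsupp.single_apply]
  constructor
  · rintro ⟨h0, hj⟩
    ext n
    rw [hF, hCw]
    by_cases hn0 : n = 0
    · subst hn0
      have := hauto 0
      simp only [Nat.cast_zero, mul_zero, neg_zero] at this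
      rw [this, h0, if_pos rfl]
    · rw [if_neg (Ne.symm hn0)]
      rcases Int.emod_emod_of_dvd n (dvd_refl 2) with _
      by_cases hpar : n % 2 = 0
      · obtain ⟨m, hm⟩ : ∃ m : ℤ, n = 2 * m := ⟨n / 2, by omega⟩
        have key : ∀ j : ℕ, 1 ≤ j → g (-(2 * (j : ℤ))) = 0 := by
          intro j hj1
          rw [hauto j]
          exact hj j hj1
        rcases lt_trichotomy m 0 with hm0 | hm0 | hm0
        · have : n = -(2 * (((-m).toNat : ℕ) : ℤ)) := by omega
          rw [this]
          exact key (-m).toNat (by omega)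
        · omega
        · have h1 : -n = -(2 * ((m.toNat : ℕ) : ℤ)) := by omega
          rw [← hsymm n, h1, key m.toNat (by omega), map_zero]
      · exact hodd n hpar
  · intro h
    have hn : ∀ n : ℤ, g n = if (0 : ℤ) = n then w else 0 := by
      intro n
      rw [← hF, h, hCw]
    constructor
    · have := hauto 0
      simp only [Nat.cast_zero, mul_zero, neg_zero] at this
      rw [← this, hn 0, if_pos rfl]
    · intro j hj1
      rw [← hauto j, hn, if_neg (by omega)]


end
end

section
/- Let R be a commutative ring with involutive automorphism *, let a, b, c, d ∈ R^n and e, f, g, h ∈ R^m. Define matrices Q = f*^t a + g^t c − e^t b* + h^t d, R' = f*^t b + g*^t d + e^t a* − h*^t c, S = g*^t a − f^t c − h^t b − e^t d*, T = g^t b − f^t d + h*^t a + e^t c*, where s* denotes the reversed conjugated sequence and s^t u is the outer product. Then (ψ_Q ψ_Q* + ψ_{R'} ψ_{R'}* + ψ_S ψ_S* + ψ_T ψ_T*)(x,y) = (ψ_a ψ_a* + ψ_b ψ_b* + ψ_c ψ_c* + ψ_d ψ_d*)(x) · (ψ_e ψ_e* + ψ_f ψ_f* + ψ_g ψ_g*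 + ψ_h ψ_h*)(y). -/
noncomputable section
open LaurentPolynomial Finset

variable {R : Type*}

section AuxStmt9

variable [CommRing R]

theorem lstar2_single (σ : R →+* R) (p : ℤ × ℤ) (r : R) :
    lstar2 σ (AddMonoidAlgebra.single p r) = AddMonoidAlgebra.single (-p) (σ r) := by
  simp only [lstar2, AddMonoidAlgebra.single, Finsupp.mapRange_single,
    Finsupp.equivMapDomain_single, Equiv.neg_apply, AddMonoidAlgebra.coeff_ofCoeff]

theorem lstar2_zero (σ : R →+* R) : lstar2 σ (0 : Laurent2 R) = 0 := by
  simp [lstar2]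

theorem lstar2_add (σ : R →+* R) (x y : Laurent2 R) :
    lstar2 σ (x + y) = lstar2 σ x + lstar2 σ y := by
  unfold lstar2
  rw [AddMonoidAlgebra.coeff_add, Finsupp.mapRange_add (map_add σ), Finsupp.equivMapDomain_eq_mapDomain,
    Finsupp.equivMapDomain_eq_mapDomain, Finsupp.equivMapDomain_eq_mapDomain,
    Finsupp.mapDomain_add, AddMonoidAlgebra.ofCoeff_add]

/-- `lstar2` bundled as an additive monoid hom. -/
def lstar2Hom (σ : R →+* R) : Laurent2 R →+ Laurent2 R :=
  { toFun := lstar2 σ, map_zero' := lstar2_zero σ, map_add' := lstar2_add σ }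

theorem lstar2_sub (σ : R →+* R) (x y : Laurent2 R) :
    lstar2 σ (x - y) = lstar2 σ x - lstar2 σ y := by
  have h := lstar2_add σ (x - y) y
  rw [sub_add_cancel] at h
  rw [eq_sub_iff_add_eq, ← h]

theorem lstar2_mul (σ : R →+* R) (x y : Laurent2 R) :
    lstar2 σ (x * y) = lstar2 σ x * lstar2 σ y := by
  induction x using AddMonoidAlgebra.induction_linear with
  | zero => simp [lstar2_zero]
  | add f g hf hg => rw [add_mul, lstar2_add, hf, hg, lstar2_add, add_mul]
  | single p r =>
    induction y using AddMonoidAlgebra.induction_linear with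
    | zero => simp [lstar2_zero]
    | add f g hf hg => rw [mul_add, lstar2_add, hf, hg, lstar2_add, mul_add]
    | single q s =>
      show lstar2 σ (AddMonoidAlgebra.single p r * AddMonoidAlgebra.single q s) = _
      rw [AddMonoidAlgebra.single_mul_single, lstar2_single, lstar2_single, lstar2_single,
        AddMonoidAlgebra.single_mul_single, neg_add, map_mul]

theorem lstar2_invol (σ : R →+* R) (hσ : ∀ r, σ (σ r) = r) (x : Laurent2 R) :
    lstar2 σ (lstar2 σ x) = x := by
  induction x using AddMonoidAlgebra.induction_linear with
  | zero => simp [lstar2_zero]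
  | add f g hf hg => rw [lstar2_add, lstar2_add, hf, hg]
  | single p r =>
    show lstar2 σ (lstar2 σ (AddMonoidAlgebra.single p r)) = _
    rw [lstar2_single, lstar2_single, neg_neg, hσ]

theorem lstar2_psiX {l : ℕ} (σ : R →+* R) (b : Fin l → R) :
    lstar2 σ (psiX b) = psiX (revSeq (⇑σ) b) := by
  unfold psiX revSeq
  rw [show lstar2 σ (∑ i : Fin l, AddMonoidAlgebra.single
        ((2 * (i : ℤ) + 1 - l, (0 : ℤ)) : ℤ × ℤ) (b i))
      = ∑ i : Fin l, lstar2 σ (AddMonoidAlgebra.single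
        ((2 * (i : ℤ) + 1 - l, (0 : ℤ)) : ℤ × ℤ) (b i)) from
    map_sum (lstar2Hom σ) _ _]
  refine Fintype.sum_equiv Fin.revPerm _ _ fun i => ?_
  rw [lstar2_single]
  simp only [Fin.revPerm_apply, Fin.rev_rev]
  have h2 : (i : ℕ) < l := i.isLt
  have h1 : ((Fin.rev i : Fin l) : ℕ) = l - 1 - (i : ℕ) := by rw [Fin.val_rev]; omega
  congr 1
  rw [Prod.neg_mk, neg_zero]
  exact Prod.ext (by omega) rfl

theorem lstar2_psiY {l : ℕ} (σ : R →+* R) (b : Fin l → R) :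
    lstar2 σ (psiY b) = psiY (revSeq (⇑σ) b) := by
  unfold psiY revSeq
  rw [show lstar2 σ (∑ i : Fin l, AddMonoidAlgebra.single
        (((0 : ℤ), 2 * (i : ℤ) + 1 - l) : ℤ × ℤ) (b i))
      = ∑ i : Fin l, lstar2 σ (AddMonoidAlgebra.single
        (((0 : ℤ), 2 * (i : ℤ) + 1 - l) : ℤ × ℤ) (b i)) from
    map_sum (lstar2Hom σ) _ _]
  refine Fintype.sum_equiv Fin.revPerm _ _ fun i => ?_
  rw [lstar2_single]
  simp only [Fin.revPerm_apply, Fin.rev_rev]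
  have h2 : (i : ℕ) < l := i.isLt
  have h1 : ((Fin.rev i : Fin l) : ℕ) = l - 1 - (i : ℕ) := by rw [Fin.val_rev]; omega
  congr 1
  rw [Prod.neg_mk, neg_zero]
  exact Prod.ext rfl (by omega)

theorem psiX_add {l : ℕ} (a b : Fin l → R) : psiX (a + b) = psiX a + psiX b := by
  simp [psiX, Finsupp.single_add, Finset.sum_add_distrib]

theorem psiX_sub {l : ℕ} (a b : Fin l → R) : psiX (a - b) = psiX a - psiX b := by
  simp [psiX, Finsupp.single_sub, Finset.sum_sub_distrib]

theorem psiMat_add {m n : ℕ} (A B : Fin m → Fin n → R) :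
    psiMat (A + B) = psiMat A + psiMat B := by
  simp [psiMat, Pi.add_apply, psiX_add, add_mul, Finset.sum_add_distrib]

theorem psiMat_sub {m n : ℕ} (A B : Fin m → Fin n → R) :
    psiMat (A - B) = psiMat A - psiMat B := by
  simp [psiMat, Pi.sub_apply, psiX_sub, sub_mul, Finset.sum_sub_distrib]

theorem psiMat_outer {m n : ℕ} (f : Fin m → R) (a : Fin n → R) :
    psiMat (outer f a) = psiY f * psiX a := by
  unfold psiMat psiX psiY outer
  rw [Finset.sum_mul_sum]
  refine Finset.sum_congr rfl fun i _ => ?_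
  rw [Finset.sum_mul]
  refine Finset.sum_congr rfl fun j _ => ?_
  rw [AddMonoidAlgebra.single_mul_single, AddMonoidAlgebra.single_mul_single]
  simp [Prod.mk_add_mk, mul_comm]

end AuxStmt9

/-- Lagrange identity for the matrices built from eight sequences. -/
theorem stmt9 {R : Type*} [CommRing R] (σ : R ≃+* R) (hσ : ∀ r, σ (σ r) = r)
    {m n : ℕ} (a b c d : Fin n → R) (e f g h : Fin m → R) :
    let st : R → R := fun r => σ r
    let σ' : R →+* R := (σ : R →+* R)
    let Q := outer (revSeq st f) a + outer g c - outer e (revSeq st b) + outer h d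
    let R' := outer (revSeq st f) b + outer (revSeq st g) d + outer e (revSeq st a)
                - outer (revSeq st h) c
    let S := outer (revSeq st g) a - outer f c - outer h b - outer e (revSeq st d)
    let T' := outer g b - outer f d + outer (revSeq st h) a + outer e (revSeq st c)
    psiMat Q * lstar2 σ' (psiMat Q) + psiMat R' * lstar2 σ' (psiMat R')
        + psiMat S * lstar2 σ' (psiMat S) + psiMat T' * lstar2 σ' (psiMat T')
      = (psiX a * lstar2 σ' (psiX a) + psiX b * lstar2 σ' (psiX b)
            + psiX c * lstar2 σ' (psiX c) + psiX d * lstar2 σ' (psiX d))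
        * (psiY e * lstar2 σ' (psiY e) + psiY f * lstar2 σ' (psiY f)
            + psiY g * lstar2 σ' (psiY g) + psiY h * lstar2 σ' (psiY h)) := by
  intro st σ' Q R' S T'
  have hst : st = ⇑σ' := rfl
  have hσ' : ∀ r, σ' (σ' r) = r := hσ
  simp only [Q, R', S, T', psiMat_add, psiMat_sub, psiMat_outer, hst,
    ← lstar2_psiX σ', ← lstar2_psiY σ',
    lstar2_add, lstar2_sub, lstar2_mul, lstar2_invol σ' hσ']
  ring

end
end

section
/- Main theorem (Yang multiplication via two-variable Laurent polynomials): Let m, n be positive integers and let a, b ∈ {±1}^{n+1}, c, d ∈ {±1}^n, f, g ∈ {±1}^{m+1}, h, e ∈ {±1}^m satisfy (φ_a φ_a* + φ_b φ_b* + φ_c φ_c* + φ_d φ_d*)(x) = 2(2n+1) and (φ_e φ_e* + φ_f φ_f* + φ_g φ_g* + φ_h φ_h*)(x) = 2(2m+1) in ℤ[x,x⁻¹]. Then there exist sequences q, r, s, t ∈ {±1}^{(2m+1)(2n+1)} such that (φ_q φ_q* + φ_r φ_r* + φ_s φ_s* + φ_t φ_t*)(x) = 4(2m+1)(2n+1).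 -/
noncomputable section
open LaurentPolynomial Finset

variable {R : Type*}

section YangAux
open Finset


def SHom : LaurentPolynomial ℤ →+* LaurentPolynomial ℤ :=
  AddMonoidAlgebra.mapDomainRingHom ℤ (AddMonoidHom.mk' (fun x : ℤ => -x) (by intro a b; ring))

def StHom (d : ℤ) : LaurentPolynomial ℤ →+* LaurentPolynomial ℤ :=
  AddMonoidAlgebra.mapDomainRingHom ℤ (AddMonoidHom.mk' (fun x : ℤ => d * x) (by intro a b; ring))

lemma SHom_CT (r e : ℤ) : SHom (C r * T e) = C r * T (-e) := by
  rw [← single_eq_C_mul_T, ← single_eq_C_mul_T]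
  show AddMonoidAlgebra.mapDomain _ _ = _
  rw [AddMonoidAlgebra.mapDomain_single]
  rfl

lemma StHom_CT (d r e : ℤ) : StHom d (C r * T e) = C r * T (d * e) := by
  rw [← single_eq_C_mul_T, ← single_eq_C_mul_T]
  show AddMonoidAlgebra.mapDomain _ _ = _
  rw [AddMonoidAlgebra.mapDomain_single]
  rfl

lemma SHom_C (r : ℤ) : SHom (C r) = C r := by
  have := SHom_CT r 0
  simpa using this

lemma SHom_T (e : ℤ) : SHom (T e) = T (-e) := by
  have := SHom_CT 1 e
  simpa using this

lemma StHom_C (d r : ℤ) : StHom d (C r) = C r := by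
  have := StHom_CT d r 0
  simpa using this

lemma SHom_SHom (p : LaurentPolynomial ℤ) : SHom (SHom p) = p := by
  apply AddMonoidAlgebra.coeff_injective
  show Finsupp.mapDomain _ (Finsupp.mapDomain _ p.coeff) = p.coeff
  rw [← Finsupp.mapDomain_comp]
  convert Finsupp.mapDomain_id
  ext x
  simp

lemma StHom_SHom (d : ℤ) (p : LaurentPolynomial ℤ) :
    StHom d (SHom p) = SHom (StHom d p) := by
  apply AddMonoidAlgebra.coeff_injective
  show Finsupp.mapDomain _ (Finsupp.mapDomain _ p.coeff) = Finsupp.mapDomain _ (Finsupp.mapDomain _ p.coeff)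
  rw [← Finsupp.mapDomain_comp, ← Finsupp.mapDomain_comp]
  congr 1
  ext x
  show d * (-x) = -(d * x)
  ring

lemma lstar_eq (p : LaurentPolynomial ℤ) : lstar (RingHom.id ℤ) p = SHom p := by
  apply AddMonoidAlgebra.coeff_injective
  show Finsupp.equivMapDomain _ _ = Finsupp.mapDomain _ p.coeff
  rw [Finsupp.equivMapDomain_eq_mapDomain]
  have h1 : Finsupp.mapRange (⇑(RingHom.id ℤ)) (RingHom.id ℤ).map_zero p.coeff = p.coeff := by
    have : ⇑(RingHom.id ℤ) = id := rfl
    simp only [this]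
    exact Finsupp.mapRange_id p.coeff
  rw [h1]
  rfl

def phiD (d : ℤ) (l : ℕ) (s : ℕ → ℤ) : LaurentPolynomial ℤ :=
  ∑ i ∈ range l, C (s i) * T (d * i)

lemma StHom_phiD (d : ℤ) (l : ℕ) (s : ℕ → ℤ) :
    StHom d (phiD 1 l s) = phiD d l s := by
  unfold phiD
  rw [map_sum]
  refine sum_congr rfl fun i _ => ?_
  rw [StHom_CT]
  ring_nf

lemma phiD_neg (d : ℤ) (l : ℕ) (s : ℕ → ℤ) :
    phiD d l (fun i => -(s i)) = -phiD d l s := by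
  unfold phiD
  rw [← sum_neg_distrib]
  · refine sum_congr rfl fun i _ => ?_
    rw [map_neg, neg_mul]

lemma SHom_phiD_apply (d : ℤ) (l : ℕ) (s : ℕ → ℤ) :
    SHom (phiD d l s) = ∑ i ∈ range l, C (s i) * T (-(d * i)) := by
  unfold phiD
  rw [map_sum]
  exact sum_congr rfl fun i _ => SHom_CT _ _



lemma sum_range_mul' {M : Type*} [AddCommMonoid M] (F : ℕ → M) (K t : ℕ) :
    ∑ i ∈ range (K * t), F i = ∑ k ∈ range K, ∑ j ∈ range t, F (k * t + j) := by
  induction K with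
  | zero => simp
  | succ K ih =>
    rw [Nat.succ_mul, Finset.sum_range_add, ih, sum_range_succ]

lemma sum_range_odd' {M : Type*} [AddCommMonoid M] (F : ℕ → M) (l : ℕ) :
    ∑ i ∈ range (2 * l + 1), F i
      = ∑ i ∈ range (l + 1), F (2 * i) + ∑ i ∈ range l, F (2 * i + 1) := by
  induction l with
  | zero => simp
  | succ l ih =>
    have h1 : 2 * (l + 1) + 1 = (2 * l + 1) + 1 + 1 := by ring
    rw [h1, sum_range_succ, sum_range_succ, ih,
      sum_range_succ (fun i => F (2 * i)) (l + 1), sum_range_succ (fun i => F (2 * i + 1)) l]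
    have e1 : 2 * l + 1 + 1 = 2 * (l + 1) := by ring
    rw [e1]
    abel

lemma rowsum (n : ℕ) (Y1 Y2 : ℤ) (X1 X2 : ℕ → ℤ) (base : ℤ) :
    ∑ j ∈ range (2 * n + 1),
        C (if j % 2 = 0 then Y1 * X1 (j / 2) else Y2 * X2 (j / 2)) * T (base + (j : ℤ))
      = T base * (C Y1 * (∑ i ∈ range (n + 1), C (X1 i) * T (2 * (i : ℤ)))
          + C Y2 * (T 1 * ∑ i ∈ range n, C (X2 i) * T (2 * (i : ℤ)))) := by
  rw [sum_range_odd' (fun j =>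
    C (if j % 2 = 0 then Y1 * X1 (j / 2) else Y2 * X2 (j / 2)) * T (base + (j : ℤ))) n]
  rw [mul_add]
  congr 1
  · rw [mul_sum, mul_sum]
    refine sum_congr rfl fun i _ => ?_
    have h0 : (2 * i) % 2 = 0 := by omega
    have h2 : (2 * i) / 2 = i := by omega
    rw [if_pos h0, h2, map_mul]
    have he : base + ((2 * i : ℕ) : ℤ) = base + 2 * (i : ℤ) := by push_cast; ring
    rw [he, T_add]
    ring
  · rw [mul_sum, mul_sum, mul_sum]
    refine sum_congr rfl fun i _ => ?_
    have h0 : ¬((2 * i + 1) % 2 = 0) := by omega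
    have h2 : (2 * i + 1) / 2 = i := by omega
    rw [if_neg h0, h2, map_mul]
    have he : base + ((2 * i + 1 : ℕ) : ℤ) = base + 1 + 2 * (i : ℤ) := by push_cast; ring
    rw [he, T_add, T_add]
    ring

def mk8 (t : ℕ) (Yee Yeo Yoe Yoo Xee Xeo Xoe Xoo : ℕ → ℤ) : ℕ → ℤ := fun i =>
  if (i / t) % 2 = 0 then
    (if (i % t) % 2 = 0 then Yee (i / t / 2) * Xee (i % t / 2)
     else Yeo (i / t / 2) * Xeo (i % t / 2))
  else
    (if (i % t) % 2 = 0 then Yoe (i / t / 2) * Xoe (i % t / 2)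
     else Yoo (i / t / 2) * Xoo (i % t / 2))

set_option maxHeartbeats 1000000 in
lemma struct (m n : ℕ) (Yee Yeo Yoe Yoo Xee Xeo Xoe Xoo : ℕ → ℤ) :
    phiD 1 ((2 * m + 1) * (2 * n + 1)) (mk8 (2 * n + 1) Yee Yeo Yoe Yoo Xee Xeo Xoe Xoo)
      = phiD (2 * (2 * ↑n + 1)) (m + 1) Yee * phiD 2 (n + 1) Xee
      + phiD (2 * (2 * ↑n + 1)) (m + 1) Yeo * (T 1 * phiD 2 n Xeo)
      + T (2 * ↑n + 1) * phiD (2 * (2 * ↑n + 1)) m Yoe * phiD 2 (n + 1) Xoe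
      + T (2 * ↑n + 1) * phiD (2 * (2 * ↑n + 1)) m Yoo * (T 1 * phiD 2 n Xoo) := by
  have key : phiD 1 ((2 * m + 1) * (2 * n + 1)) (mk8 (2 * n + 1) Yee Yeo Yoe Yoo Xee Xeo Xoe Xoo)
      = ∑ k ∈ range (2 * m + 1), T ((2 * ↑n + 1) * (k : ℤ)) *
          (if k % 2 = 0 then
            C (Yee (k / 2)) * (∑ i ∈ range (n + 1), C (Xee i) * T (2 * (i : ℤ)))
              + C (Yeo (k / 2)) * (T 1 * ∑ i ∈ range n, C (Xeo i) * T (2 * (i : ℤ)))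
           else
            C (Yoe (k / 2)) * (∑ i ∈ range (n + 1), C (Xoe i) * T (2 * (i : ℤ)))
              + C (Yoo (k / 2)) * (T 1 * ∑ i ∈ range n, C (Xoo i) * T (2 * (i : ℤ)))) := by
    unfold phiD
    rw [sum_range_mul' _ (2 * m + 1) (2 * n + 1)]
    refine sum_congr rfl fun k _ => ?_
    set t : ℕ := 2 * n + 1 with ht
    have htpos : 0 < t := by omega
    have hstep : ∀ j, j < t →
        C (mk8 t Yee Yeo Yoe Yoo Xee Xeo Xoe Xoo (k * t + j)) * T (1 * ((k * t + j : ℕ) : ℤ))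
          = C (if j % 2 = 0 then (if k % 2 = 0 then Yee (k / 2) else Yoe (k / 2)) *
                  (if k % 2 = 0 then Xee (j / 2) else Xoe (j / 2))
               else (if k % 2 = 0 then Yeo (k / 2) else Yoo (k / 2)) *
                  (if k % 2 = 0 then Xeo (j / 2) else Xoo (j / 2)))
              * T (((2 * ↑n + 1) * (k : ℤ)) + (j : ℤ)) := by
      intro j hj
      have hdiv : (k * t + j) / t = k := by
        rw [mul_comm k t, Nat.mul_add_div htpos, Nat.div_eq_of_lt hj, Nat.add_zero]
      have hmod : (k * t + j) % t = j := by
        rw [mul_comm k t, Nat.mul_add_mod, Nat.mod_eq_of_lt hj]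
      have hexp : (1 : ℤ) * ((k * t + j : ℕ) : ℤ) = ((2 * ↑n + 1) * (k : ℤ)) + (j : ℤ) := by
        rw [ht]; push_cast; ring
      unfold mk8
      rw [hdiv, hmod, hexp]
      by_cases hk : k % 2 = 0
      · rw [if_pos hk]
        by_cases hjp : j % 2 = 0
        · rw [if_pos hjp, if_pos hjp, if_pos hk, if_pos hk]
        · rw [if_neg hjp, if_neg hjp, if_pos hk, if_pos hk]
      · rw [if_neg hk]
        by_cases hjp : j % 2 = 0
        · rw [if_pos hjp, if_pos hjp, if_neg hk, if_neg hk]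
        · rw [if_neg hjp, if_neg hjp, if_neg hk, if_neg hk]
    rw [sum_congr rfl (fun j hj => hstep j (mem_range.mp hj))]
    rw [ht]
    by_cases hk : k % 2 = 0
    · simp only [if_pos hk]
      have := rowsum n (Yee (k / 2)) (Yeo (k / 2)) Xee Xeo ((2 * ↑n + 1) * (k : ℤ))
      exact this
    · simp only [if_neg hk]
      have := rowsum n (Yoe (k / 2)) (Yoo (k / 2)) Xoe Xoo ((2 * ↑n + 1) * (k : ℤ))
      exact this
  rw [key]
  unfold phiD
  rw [sum_range_odd' (fun k => T ((2 * ↑n + 1) * (k : ℤ)) *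
          (if k % 2 = 0 then
            C (Yee (k / 2)) * (∑ i ∈ range (n + 1), C (Xee i) * T (2 * (i : ℤ)))
              + C (Yeo (k / 2)) * (T 1 * ∑ i ∈ range n, C (Xeo i) * T (2 * (i : ℤ)))
           else
            C (Yoe (k / 2)) * (∑ i ∈ range (n + 1), C (Xoe i) * T (2 * (i : ℤ)))
              + C (Yoo (k / 2)) * (T 1 * ∑ i ∈ range n, C (Xoo i) * T (2 * (i : ℤ))))) m]
  have heven : ∑ k ∈ range (m + 1), T ((2 * ↑n + 1) * ((2 * k : ℕ) : ℤ)) *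
          (if (2 * k) % 2 = 0 then
            C (Yee ((2 * k) / 2)) * (∑ i ∈ range (n + 1), C (Xee i) * T (2 * (i : ℤ)))
              + C (Yeo ((2 * k) / 2)) * (T 1 * ∑ i ∈ range n, C (Xeo i) * T (2 * (i : ℤ)))
           else
            C (Yoe ((2 * k) / 2)) * (∑ i ∈ range (n + 1), C (Xoe i) * T (2 * (i : ℤ)))
              + C (Yoo ((2 * k) / 2)) * (T 1 * ∑ i ∈ range n, C (Xoo i) * T (2 * (i : ℤ))))
      = (∑ i ∈ range (m + 1), C (Yee i) * T (2 * (2 * ↑n + 1) * (i : ℤ)))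
          * (∑ i ∈ range (n + 1), C (Xee i) * T (2 * (i : ℤ)))
        + (∑ i ∈ range (m + 1), C (Yeo i) * T (2 * (2 * ↑n + 1) * (i : ℤ)))
          * (T 1 * ∑ i ∈ range n, C (Xeo i) * T (2 * (i : ℤ))) := by
    rw [Finset.sum_mul (s := range (m + 1)) (f := fun i => C (Yee i) * T (2 * (2 * ↑n + 1) * (i : ℤ)))
        (a := ∑ i ∈ range (n + 1), C (Xee i) * T (2 * (i : ℤ))),
      Finset.sum_mul (s := range (m + 1)) (f := fun i => C (Yeo i) * T (2 * (2 * ↑n + 1) * (i : ℤ)))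
        (a := T 1 * ∑ i ∈ range n, C (Xeo i) * T (2 * (i : ℤ))),
      ← sum_add_distrib]
    refine sum_congr rfl fun k _ => ?_
    have h0 : (2 * k) % 2 = 0 := by omega
    have h2 : (2 * k) / 2 = k := by omega
    rw [if_pos h0, h2]
    have hexp : (2 * ↑n + 1) * ((2 * k : ℕ) : ℤ) = (2 * (2 * ↑n + 1)) * (k : ℤ) := by
      push_cast; ring
    rw [hexp]
    ring
  have hodd : ∑ k ∈ range m, T ((2 * ↑n + 1) * ((2 * k + 1 : ℕ) : ℤ)) *
          (if (2 * k + 1) % 2 = 0 then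
            C (Yee ((2 * k + 1) / 2)) * (∑ i ∈ range (n + 1), C (Xee i) * T (2 * (i : ℤ)))
              + C (Yeo ((2 * k + 1) / 2)) * (T 1 * ∑ i ∈ range n, C (Xeo i) * T (2 * (i : ℤ)))
           else
            C (Yoe ((2 * k + 1) / 2)) * (∑ i ∈ range (n + 1), C (Xoe i) * T (2 * (i : ℤ)))
              + C (Yoo ((2 * k + 1) / 2)) * (T 1 * ∑ i ∈ range n, C (Xoo i) * T (2 * (i : ℤ))))
      = T (2 * ↑n + 1) * (∑ i ∈ range m, C (Yoe i) * T (2 * (2 * ↑n + 1) * (i : ℤ)))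
          * (∑ i ∈ range (n + 1), C (Xoe i) * T (2 * (i : ℤ)))
        + T (2 * ↑n + 1) * (∑ i ∈ range m, C (Yoo i) * T (2 * (2 * ↑n + 1) * (i : ℤ)))
          * (T 1 * ∑ i ∈ range n, C (Xoo i) * T (2 * (i : ℤ))) := by
    rw [Finset.mul_sum (s := range m) (f := fun i => C (Yoe i) * T (2 * (2 * ↑n + 1) * (i : ℤ)))
        (a := T (2 * ↑n + 1)),
      Finset.sum_mul (s := range m) (f := fun i => T (2 * ↑n + 1) * (C (Yoe i) * T (2 * (2 * ↑n + 1) * (i : ℤ))))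
        (a := ∑ i ∈ range (n + 1), C (Xoe i) * T (2 * (i : ℤ))),
      Finset.mul_sum (s := range m) (f := fun i => C (Yoo i) * T (2 * (2 * ↑n + 1) * (i : ℤ)))
        (a := T (2 * ↑n + 1)),
      Finset.sum_mul (s := range m) (f := fun i => T (2 * ↑n + 1) * (C (Yoo i) * T (2 * (2 * ↑n + 1) * (i : ℤ))))
        (a := T 1 * ∑ i ∈ range n, C (Xoo i) * T (2 * (i : ℤ))),
      ← sum_add_distrib]
    refine sum_congr rfl fun k _ => ?_
    have h0 : ¬((2 * k + 1) % 2 = 0) := by omega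
    have h2 : (2 * k + 1) / 2 = k := by omega
    rw [if_neg h0, h2]
    have hexp : (2 * ↑n + 1) * ((2 * k + 1 : ℕ) : ℤ) = (2 * ↑n + 1) + (2 * (2 * ↑n + 1)) * (k : ℤ) := by
      push_cast; ring
    rw [hexp, T_add]
    ring
  rw [heven, hodd]
  ring


lemma phiD_rev (d : ℤ) (l : ℕ) (s : ℕ → ℤ) :
    phiD d l (fun i => s (l - 1 - i)) = T (d * ((l : ℤ) - 1)) * SHom (phiD d l s) := by
  unfold phiD
  rw [map_sum, mul_sum]
  rw [← sum_range_reflect (fun i => C (s (l - 1 - i)) * T (d * (i : ℤ))) l]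
  refine sum_congr rfl fun j hj => ?_
  have hj' := mem_range.mp hj
  have h1 : l - 1 - (l - 1 - j) = j := by omega
  rw [h1, SHom_CT]
  have h2 : ((l - 1 - j : ℕ) : ℤ) = (l : ℤ) - 1 - (j : ℤ) := by omega
  rw [h2]
  rw [show d * ((l : ℤ) - 1 - (j : ℤ)) = d * ((l : ℤ) - 1) + -(d * (j : ℤ)) by ring, T_add]
  ring

lemma phiD_rev_succ (d : ℤ) (l : ℕ) (s : ℕ → ℤ) :
    phiD d (l + 1) (fun i => s (l - i)) = T (d * (l : ℤ)) * SHom (phiD d (l + 1) s) := by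
  have h := phiD_rev d (l + 1) s
  have h1 : (fun i => s (l + 1 - 1 - i)) = (fun i => s (l - i)) := by
    funext i; simp
  have h2 : ((l + 1 : ℕ) : ℤ) - 1 = (l : ℤ) := by push_cast; ring
  rw [h1, h2] at h
  exact h

lemma hallPhi_eq (l : ℕ) (s : ℕ → ℤ) :
    hallPhi (fun i : Fin l => s i) = phiD 1 l s := by
  unfold hallPhi phiD
  rw [← Fin.sum_univ_eq_sum_range (fun i => C (s i) * T (1 * (i : ℤ))) l]
  refine Finset.sum_congr rfl fun i _ => ?_
  rw [one_mul]

lemma hallPhi_ext {l : ℕ} (a : Fin l → ℤ) :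
    hallPhi a = phiD 1 l (fun i => if h : i < l then a ⟨i, h⟩ else 1) := by
  rw [← hallPhi_eq]
  congr 1
  funext i
  simp [i.isLt]

lemma pm_mul {x y : ℤ} (hx : x = 1 ∨ x = -1) (hy : y = 1 ∨ y = -1) :
    x * y = 1 ∨ x * y = -1 := by
  rcases hx with h | h <;> rcases hy with h' | h' <;> simp [h, h']

lemma pm_neg {x : ℤ} (hx : x = 1 ∨ x = -1) : -x = 1 ∨ -x = -1 := by
  rcases hx with h | h <;> simp [h]

lemma ext_pm {l : ℕ} (a : Fin l → ℤ) (ha : ∀ i, a i = 1 ∨ a i = -1) (i : ℕ) :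
    (if h : i < l then a ⟨i, h⟩ else 1) = 1 ∨ (if h : i < l then a ⟨i, h⟩ else 1) = -1 := by
  split
  · exact ha _
  · left; rfl

lemma mk8_pm (t : ℕ) (Yee Yeo Yoe Yoo Xee Xeo Xoe Xoo : ℕ → ℤ)
    (h1 : ∀ i, Yee i = 1 ∨ Yee i = -1) (h2 : ∀ i, Yeo i = 1 ∨ Yeo i = -1)
    (h3 : ∀ i, Yoe i = 1 ∨ Yoe i = -1) (h4 : ∀ i, Yoo i = 1 ∨ Yoo i = -1)
    (h5 : ∀ i, Xee i = 1 ∨ Xee i = -1) (h6 : ∀ i, Xeo i = 1 ∨ Xeo i = -1)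
    (h7 : ∀ i, Xoe i = 1 ∨ Xoe i = -1) (h8 : ∀ i, Xoo i = 1 ∨ Xoo i = -1)
    (i : ℕ) :
    mk8 t Yee Yeo Yoe Yoo Xee Xeo Xoe Xoo i = 1 ∨
      mk8 t Yee Yeo Yoe Yoo Xee Xeo Xoe Xoo i = -1 := by
  unfold mk8
  split_ifs
  · exact pm_mul (h1 _) (h5 _)
  · exact pm_mul (h2 _) (h6 _)
  · exact pm_mul (h3 _) (h7 _)
  · exact pm_mul (h4 _) (h8 _)

end YangAux


/-- main theorem — Yang multiplication via Hall polynomials. -/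
theorem stmt14 (m n : ℕ) (hm : 0 < m) (hn : 0 < n)
    (a b : Fin (n + 1) → ℤ) (c d : Fin n → ℤ)
    (f g : Fin (m + 1) → ℤ) (h e : Fin m → ℤ)
    (ha : ∀ i, a i = 1 ∨ a i = -1) (hb : ∀ i, b i = 1 ∨ b i = -1)
    (hc : ∀ i, c i = 1 ∨ c i = -1) (hd : ∀ i, d i = 1 ∨ d i = -1)
    (hf : ∀ i, f i = 1 ∨ f i = -1) (hg : ∀ i, g i = 1 ∨ g i = -1)
    (hh : ∀ i, h i = 1 ∨ h i = -1) (he : ∀ i, e i = 1 ∨ e i = -1)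
    (habcd : hallPhi a * lstar (RingHom.id ℤ) (hallPhi a)
        + hallPhi b * lstar (RingHom.id ℤ) (hallPhi b)
        + hallPhi c * lstar (RingHom.id ℤ) (hallPhi c)
        + hallPhi d * lstar (RingHom.id ℤ) (hallPhi d)
      = C ((2 * (2 * n + 1) : ℕ) : ℤ))
    (hefgh : hallPhi e * lstar (RingHom.id ℤ) (hallPhi e)
        + hallPhi f * lstar (RingHom.id ℤ) (hallPhi f)
        + hallPhi g * lstar (RingHom.id ℤ) (hallPhi g)
        + hallPhi h * lstar (RingHom.id ℤ) (hallPhi h)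
      = C ((2 * (2 * m + 1) : ℕ) : ℤ)) :
    ∃ q r s t : Fin ((2 * m + 1) * (2 * n + 1)) → ℤ,
      (∀ i, q i = 1 ∨ q i = -1) ∧ (∀ i, r i = 1 ∨ r i = -1) ∧
      (∀ i, s i = 1 ∨ s i = -1) ∧ (∀ i, t i = 1 ∨ t i = -1) ∧
      hallPhi q * lstar (RingHom.id ℤ) (hallPhi q)
          + hallPhi r * lstar (RingHom.id ℤ) (hallPhi r)
          + hallPhi s * lstar (RingHom.id ℤ) (hallPhi s)
          + hallPhi t * lstar (RingHom.id ℤ) (hallPhi t)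
        = C ((4 * (2 * m + 1) * (2 * n + 1) : ℕ) : ℤ) := by
  classical
  -- junk-extended sequences
  set aN : ℕ → ℤ := fun i => if hlt : i < n + 1 then a ⟨i, hlt⟩ else 1 with haN
  set bN : ℕ → ℤ := fun i => if hlt : i < n + 1 then b ⟨i, hlt⟩ else 1 with hbN
  set cN : ℕ → ℤ := fun i => if hlt : i < n then c ⟨i, hlt⟩ else 1 with hcN
  set dN : ℕ → ℤ := fun i => if hlt : i < n then d ⟨i, hlt⟩ else 1 with hdN
  set fN : ℕ → ℤ := fun i => if hlt : i < m + 1 then f ⟨i, hlt⟩ else 1 with hfN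
  set gN : ℕ → ℤ := fun i => if hlt : i < m + 1 then g ⟨i, hlt⟩ else 1 with hgN
  set hN : ℕ → ℤ := fun i => if hlt : i < m then h ⟨i, hlt⟩ else 1 with hhN
  set eN : ℕ → ℤ := fun i => if hlt : i < m then e ⟨i, hlt⟩ else 1 with heN
  classical
  have hpa : ∀ i, aN i = 1 ∨ aN i = -1 := by
    intro i; simp only [haN]; exact ext_pm a ha i
  have hpb : ∀ i, bN i = 1 ∨ bN i = -1 := by
    intro i; simp only [hbN]; exact ext_pm b hb i
  have hpc : ∀ i, cN i = 1 ∨ cN i = -1 := by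
    intro i; simp only [hcN]; exact ext_pm c hc i
  have hpd : ∀ i, dN i = 1 ∨ dN i = -1 := by
    intro i; simp only [hdN]; exact ext_pm d hd i
  have hpf : ∀ i, fN i = 1 ∨ fN i = -1 := by
    intro i; simp only [hfN]; exact ext_pm f hf i
  have hpg : ∀ i, gN i = 1 ∨ gN i = -1 := by
    intro i; simp only [hgN]; exact ext_pm g hg i
  have hph : ∀ i, hN i = 1 ∨ hN i = -1 := by
    intro i; simp only [hhN]; exact ext_pm h hh i
  have hpe : ∀ i, eN i = 1 ∨ eN i = -1 := by
    intro i; simp only [heN]; exact ext_pm e he i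
  set sq : ℕ → ℤ := mk8 (2 * n + 1) (fun k => -(fN (m - k))) (fun k => gN (m - k)) (hN) (fun k => eN (m - 1 - k)) (bN) (cN) (fun j => aN (n - j)) (dN) with hsqdef
  set sr : ℕ → ℤ := mk8 (2 * n + 1) (fun k => -(gN k)) (fun k => -(fN k)) (fun k => -(eN (m - 1 - k))) (hN) (bN) (cN) (aN) (fun j => dN (n - 1 - j)) with hsrdef
  set ss : ℕ → ℤ := mk8 (2 * n + 1) (fun k => -(gN k)) (fun k => fN (m - k)) (fun k => eN (m - 1 - k)) (fun k => hN (m - 1 - k)) (fun j => aN (n - j)) (fun j => dN (n - 1 - j)) (fun j => bN (n - j)) (cN) with hssdef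
  set st : ℕ → ℤ := mk8 (2 * n + 1) (fun k => -(fN (m - k))) (fun k => -(gN k)) (fun k => -(hN k)) (eN) (aN) (dN) (fun j => bN (n - j)) (cN) with hstdef
  have hpmsq : ∀ i : ℕ, sq i = 1 ∨ sq i = -1 := by
    rw [hsqdef]
    exact mk8_pm _ _ _ _ _ _ _ _ _ (fun k => pm_neg (hpf (m - k))) (fun k => hpg (m - k)) hph (fun k => hpe (m - 1 - k)) hpb hpc (fun j => hpa (n - j)) hpd
  have hpmsr : ∀ i : ℕ, sr i = 1 ∨ sr i = -1 := by
    rw [hsrdef]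
    exact mk8_pm _ _ _ _ _ _ _ _ _ (fun k => pm_neg (hpg k)) (fun k => pm_neg (hpf k)) (fun k => pm_neg (hpe (m - 1 - k))) hph hpb hpc hpa (fun j => hpd (n - 1 - j))
  have hpmss : ∀ i : ℕ, ss i = 1 ∨ ss i = -1 := by
    rw [hssdef]
    exact mk8_pm _ _ _ _ _ _ _ _ _ (fun k => pm_neg (hpg k)) (fun k => hpf (m - k)) (fun k => hpe (m - 1 - k)) (fun k => hph (m - 1 - k)) (fun j => hpa (n - j)) (fun j => hpd (n - 1 - j)) (fun j => hpb (n - j)) hpc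
  have hpmst : ∀ i : ℕ, st i = 1 ∨ st i = -1 := by
    rw [hstdef]
    exact mk8_pm _ _ _ _ _ _ _ _ _ (fun k => pm_neg (hpf (m - k))) (fun k => pm_neg (hpg k)) (fun k => pm_neg (hph k)) hpe hpa hpd (fun j => hpb (n - j)) hpc
  refine ⟨fun i => sq i, fun i => sr i, fun i => ss i, fun i => st i,
    fun i => hpmsq i, fun i => hpmsr i, fun i => hpmss i, fun i => hpmst i, ?_⟩
  have hab : phiD 2 (n + 1) aN * SHom (phiD 2 (n + 1) aN)
      + phiD 2 (n + 1) bN * SHom (phiD 2 (n + 1) bN)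
      + phiD 2 n cN * SHom (phiD 2 n cN)
      + phiD 2 n dN * SHom (phiD 2 n dN) = C ((2 * (2 * n + 1) : ℕ) : ℤ) := by
    have h0 := habcd
    rw [hallPhi_ext a, hallPhi_ext b, hallPhi_ext c, hallPhi_ext d] at h0
    simp only [lstar_eq] at h0
    have h1 := congrArg (StHom 2) h0
    simp only [map_add, map_mul, StHom_SHom, StHom_phiD, StHom_C] at h1
    simp only [haN, hbN, hcN, hdN]
    exact h1
  have hef : phiD (2 * (2 * (n:ℤ) + 1)) m eN * SHom (phiD (2 * (2 * (n:ℤ) + 1)) m eN)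
      + phiD (2 * (2 * (n:ℤ) + 1)) (m + 1) fN * SHom (phiD (2 * (2 * (n:ℤ) + 1)) (m + 1) fN)
      + phiD (2 * (2 * (n:ℤ) + 1)) (m + 1) gN * SHom (phiD (2 * (2 * (n:ℤ) + 1)) (m + 1) gN)
      + phiD (2 * (2 * (n:ℤ) + 1)) m hN * SHom (phiD (2 * (2 * (n:ℤ) + 1)) m hN) = C ((2 * (2 * m + 1) : ℕ) : ℤ) := by
    have h0 := hefgh
    rw [hallPhi_ext e, hallPhi_ext f, hallPhi_ext g, hallPhi_ext h] at h0
    simp only [lstar_eq] at h0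
    have h1 := congrArg (StHom (2 * (2 * (n:ℤ) + 1))) h0
    simp only [map_add, map_mul, StHom_SHom, StHom_phiD, StHom_C] at h1
    simp only [heN, hfN, hgN, hhN]
    exact h1
  have hrA : phiD 2 (n + 1) (fun j => aN (n - j))
      = T (2 * (n:ℤ) + 1) * T (-1) * SHom (phiD 2 (n + 1) aN) := by
    rw [phiD_rev_succ 2 n aN,
      show (T ((2:ℤ) * (n:ℤ)) : LaurentPolynomial ℤ) = T (2 * (n:ℤ) + 1) * T (-1) from by
        rw [← T_add]; congr 1; ring]
  have hrB : phiD 2 (n + 1) (fun j => bN (n - j))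
      = T (2 * (n:ℤ) + 1) * T (-1) * SHom (phiD 2 (n + 1) bN) := by
    rw [phiD_rev_succ 2 n bN,
      show (T ((2:ℤ) * (n:ℤ)) : LaurentPolynomial ℤ) = T (2 * (n:ℤ) + 1) * T (-1) from by
        rw [← T_add]; congr 1; ring]
  have hrD : phiD 2 n (fun j => dN (n - 1 - j))
      = T (2 * (n:ℤ) + 1) * T (-1) * T (-1) * T (-1) * SHom (phiD 2 n dN) := by
    rw [phiD_rev 2 n dN,
      show (2:ℤ) * ((n:ℤ) - 1) = (((2 * (n:ℤ) + 1) + -1) + -1) + -1 by ring, T_add, T_add, T_add]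
  have hrF : phiD (2 * (2 * (n:ℤ) + 1)) (m + 1) (fun k => fN (m - k))
      = T (2 * (2 * (n:ℤ) + 1) * (m:ℤ)) * SHom (phiD (2 * (2 * (n:ℤ) + 1)) (m + 1) fN) :=
    phiD_rev_succ (2 * (2 * (n:ℤ) + 1)) m fN
  have hrG : phiD (2 * (2 * (n:ℤ) + 1)) (m + 1) (fun k => gN (m - k))
      = T (2 * (2 * (n:ℤ) + 1) * (m:ℤ)) * SHom (phiD (2 * (2 * (n:ℤ) + 1)) (m + 1) gN) :=
    phiD_rev_succ (2 * (2 * (n:ℤ) + 1)) m gN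
  have hrE : phiD (2 * (2 * (n:ℤ) + 1)) m (fun k => eN (m - 1 - k))
      = T (2 * (2 * (n:ℤ) + 1) * (m:ℤ)) * T (-(2 * (n:ℤ) + 1)) * T (-(2 * (n:ℤ) + 1))
          * SHom (phiD (2 * (2 * (n:ℤ) + 1)) m eN) := by
    rw [phiD_rev (2 * (2 * (n:ℤ) + 1)) m eN,
      show (2 * (2 * (n:ℤ) + 1)) * ((m:ℤ) - 1)
        = ((2 * (2 * (n:ℤ) + 1) * (m:ℤ)) + -(2 * (n:ℤ) + 1)) + -(2 * (n:ℤ) + 1) by ring,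
      T_add, T_add]
  have hrH : phiD (2 * (2 * (n:ℤ) + 1)) m (fun k => hN (m - 1 - k))
      = T (2 * (2 * (n:ℤ) + 1) * (m:ℤ)) * T (-(2 * (n:ℤ) + 1)) * T (-(2 * (n:ℤ) + 1))
          * SHom (phiD (2 * (2 * (n:ℤ) + 1)) m hN) := by
    rw [phiD_rev (2 * (2 * (n:ℤ) + 1)) m hN,
      show (2 * (2 * (n:ℤ) + 1)) * ((m:ℤ) - 1)
        = ((2 * (2 * (n:ℤ) + 1) * (m:ℤ)) + -(2 * (n:ℤ) + 1)) + -(2 * (n:ℤ) + 1) by ring,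
      T_add, T_add]
  have hnF : phiD (2 * (2 * (n:ℤ) + 1)) (m + 1) (fun k => -(fN (m - k)))
      = -(T (2 * (2 * (n:ℤ) + 1) * (m:ℤ)) * SHom (phiD (2 * (2 * (n:ℤ) + 1)) (m + 1) fN)) := by
    have h1 : phiD (2 * (2 * (n:ℤ) + 1)) (m + 1) (fun k => -(fN (m - k)))
        = -(phiD (2 * (2 * (n:ℤ) + 1)) (m + 1) (fun k => fN (m - k))) := phiD_neg (2 * (2 * (n:ℤ) + 1)) (m + 1) (fun k => fN (m - k))
    rw [h1, hrF]
  have hnE : phiD (2 * (2 * (n:ℤ) + 1)) m (fun k => -(eN (m - 1 - k)))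
      = -(T (2 * (2 * (n:ℤ) + 1) * (m:ℤ)) * T (-(2 * (n:ℤ) + 1)) * T (-(2 * (n:ℤ) + 1))
          * SHom (phiD (2 * (2 * (n:ℤ) + 1)) m eN)) := by
    have h1 : phiD (2 * (2 * (n:ℤ) + 1)) m (fun k => -(eN (m - 1 - k)))
        = -(phiD (2 * (2 * (n:ℤ) + 1)) m (fun k => eN (m - 1 - k))) := phiD_neg (2 * (2 * (n:ℤ) + 1)) m (fun k => eN (m - 1 - k))
    rw [h1, hrE]
  have hnG : phiD (2 * (2 * (n:ℤ) + 1)) (m + 1) (fun k => -(gN k)) = -(phiD (2 * (2 * (n:ℤ) + 1)) (m + 1) gN) :=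
    phiD_neg (2 * (2 * (n:ℤ) + 1)) (m + 1) gN
  have hnF2 : phiD (2 * (2 * (n:ℤ) + 1)) (m + 1) (fun k => -(fN k)) = -(phiD (2 * (2 * (n:ℤ) + 1)) (m + 1) fN) :=
    phiD_neg (2 * (2 * (n:ℤ) + 1)) (m + 1) fN
  have hnH : phiD (2 * (2 * (n:ℤ) + 1)) m (fun k => -(hN k)) = -(phiD (2 * (2 * (n:ℤ) + 1)) m hN) :=
    phiD_neg (2 * (2 * (n:ℤ) + 1)) m hN
  have hx : (T 1 : LaurentPolynomial ℤ) * T (-1) = 1 := by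
    rw [← T_add, show (1 : ℤ) + -1 = 0 by ring]; exact T_zero
  have hy : (T (2 * (n:ℤ) + 1) : LaurentPolynomial ℤ) * T (-(2 * (n:ℤ) + 1)) = 1 := by
    rw [← T_add, show (2 * (n:ℤ) + 1) + -(2 * (n:ℤ) + 1) = 0 by ring]; exact T_zero
  have hz : (T (2 * (2 * (n:ℤ) + 1) * (m:ℤ)) : LaurentPolynomial ℤ)
      * T (-(2 * (2 * (n:ℤ) + 1) * (m:ℤ))) = 1 := by
    rw [← T_add, show (2 * (2 * (n:ℤ) + 1) * (m:ℤ)) + -(2 * (2 * (n:ℤ) + 1) * (m:ℤ)) = 0 by ring]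
    exact T_zero
  have hC : (C ((2 * (2 * n + 1) : ℕ) : ℤ) : LaurentPolynomial ℤ) * C ((2 * (2 * m + 1) : ℕ) : ℤ)
      = C ((4 * (2 * m + 1) * (2 * n + 1) : ℕ) : ℤ) := by
    rw [← map_mul]; congr 1; push_cast; ring
  simp only [lstar_eq]
  rw [hallPhi_eq ((2 * m + 1) * (2 * n + 1)) sq, hallPhi_eq ((2 * m + 1) * (2 * n + 1)) sr,
    hallPhi_eq ((2 * m + 1) * (2 * n + 1)) ss, hallPhi_eq ((2 * m + 1) * (2 * n + 1)) st]
  rw [hsqdef, hsrdef, hssdef, hstdef]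
  rw [struct, struct, struct, struct]
  rw [hnF, hrG, hrA, hrE, hnG, hnF2, hnE, hrD, hrF, hrH, hrB, hnH]
  simp only [map_add, map_mul, map_neg, SHom_T, SHom_SHom, neg_neg]
  set uu : LaurentPolynomial ℤ := T 1 with huu
  set ui : LaurentPolynomial ℤ := T (-1) with hui
  set vv : LaurentPolynomial ℤ := T (2 * (n:ℤ) + 1) with hvv
  set vi : LaurentPolynomial ℤ := T (-(2 * (n:ℤ) + 1)) with hvi
  set ww : LaurentPolynomial ℤ := T (2 * (2 * (n:ℤ) + 1) * (m:ℤ)) with hww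
  set wi : LaurentPolynomial ℤ := T (-(2 * (2 * (n:ℤ) + 1) * (m:ℤ))) with hwi
  set Pa : LaurentPolynomial ℤ := phiD 2 (n + 1) aN with hPa
  set Pb : LaurentPolynomial ℤ := phiD 2 (n + 1) bN with hPb
  set Pc : LaurentPolynomial ℤ := phiD 2 n cN with hPc
  set Pd : LaurentPolynomial ℤ := phiD 2 n dN with hPd
  set Pf : LaurentPolynomial ℤ := phiD (2 * (2 * (n:ℤ) + 1)) (m + 1) fN with hPf
  set Pg : LaurentPolynomial ℤ := phiD (2 * (2 * (n:ℤ) + 1)) (m + 1) gN with hPg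
  set Pe : LaurentPolynomial ℤ := phiD (2 * (2 * (n:ℤ) + 1)) m eN with hPe
  set Ph : LaurentPolynomial ℤ := phiD (2 * (2 * (n:ℤ) + 1)) m hN with hPh
  set Qa : LaurentPolynomial ℤ := SHom Pa with hQa
  set Qb : LaurentPolynomial ℤ := SHom Pb with hQb
  set Qc : LaurentPolynomial ℤ := SHom Pc with hQc
  set Qd : LaurentPolynomial ℤ := SHom Pd with hQd
  set Qf : LaurentPolynomial ℤ := SHom Pf with hQf
  set Qg : LaurentPolynomial ℤ := SHom Pg with hQg
  set Qe : LaurentPolynomial ℤ := SHom Pe with hQe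
  set Qh : LaurentPolynomial ℤ := SHom Ph with hQh
  linear_combination (Pd*Qd*Pg*Qg + Pc*Qc*Pf*Qf + ww*wi*Pc*Qc*Pg*Qg - vi*Qc*Pd*Pg*Qe - vv*Pc*Qd*Qg*Pe + vv*vi*Pc*Qc*Pe*Qe + vv*vi*Pa*Qa*Pg*Qg + vv*vi*ww*wi*Pd*Qd*Pf*Qf + vv*vi*vi*ww*wi*Qc*Pd*Pg*Qe + vv*vv*vi*ww*wi*Pc*Qd*Qg*Pe + vv*vv*vi*vi*Pd*Qd*Ph*Qh + vv*vv*vi*vi*Pb*Qb*Ph*Qh + vv*vv*vi*vi*Pa*Qa*Ph*Qh - vv*vv*vi*vi*vi*ww*Pa*Qb*Qg*Qe - vv*vv*vv*vi*vi*wi*Qa*Pb*Pg*Pe + vv*vv*vv*vi*vi*vi*ww*wi*Pd*Qd*Pe*Qe + vv*vv*vv*vi*vi*vi*ww*wi*Pc*Qc*Ph*Qh + vv*vv*vv*vv*vi*vi*vi*vi*ww*wi*Pb*Qb*Pe*Qe - ui*vv*vi*ww*Pa*Qd*Qf*Qg + ui*vv*vv*vv*vi*vi*ww*wi*Pb*Qd*Qf*Pe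 - ui*ui*vv*vv*Qb*Qd*Qg*Ph - ui*ui*vv*vv*vv*vv*vi*wi*Qa*Qd*Pe*Ph - ui*ui*ui*vv*vv*Qc*Qd*Qf*Ph + ui*ui*ui*vv*vv*vv*vi*ww*wi*Qc*Qd*Qf*Ph - uu*vv*vi*wi*Qa*Pd*Pf*Pg + uu*vv*vv*vi*vi*vi*ww*wi*Qb*Pd*Pf*Qe + uu*ui*vv*vi*ww*wi*Pd*Qd*Pf*Qf + uu*ui*vv*vv*vi*vi*Pd*Qd*Ph*Qh - uu*ui*ui*vv*vi*ww*Pa*Qd*Qf*Qg + uu*ui*ui*vv*vv*vv*vi*vi*ww*wi*Pb*Qd*Qf*Pe - uu*uu*vi*vi*Pb*Pd*Pg*Qh - uu*uu*vv*vi*vi*vi*vi*ww*Pa*Pd*Qe*Qh - uu*uu*ui*vv*vi*wi*Qa*Pd*Pf*Pg + uu*uu*ui*vv*vv*vi*vi*vi*ww*wi*Qb*Pd*Pf*Qe + uu*uu*ui*ui*vv*vi*ww*wi*Pd*Qd*Pf*Qf + uu*uu*ui*ui*vv*vv*vi*vi*Pd*Qd*Ph*Qh - uu*uu*uu*vi*vi*Pc*Pd*Pf*Qh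 + uu*uu*uu*vv*vi*vi*vi*ww*wi*Pc*Pd*Pf*Qh + uu*uu*uu*ui*ui*ui*vv*vi*ww*wi*Pd*Qd*Pf*Qf + uu*uu*uu*ui*ui*ui*vv*vv*vi*vi*Pd*Qd*Ph*Qh) * hx + (Pd*Qd*Ph*Qh + Pc*Qc*Pe*Qe + Pb*Qb*Ph*Qh + Pa*Qa*Ph*Qh + Pa*Qa*Pg*Qg + ww*wi*Pd*Qd*Pe*Qe + ww*wi*Pd*Qd*Pf*Qf + ww*wi*Pc*Qc*Ph*Qh + ww*wi*Pb*Qb*Pe*Qe + ww*wi*Pa*Qa*Pe*Qe - 0*vi*ww*Pa*Qb*Qg*Qe + vi*ww*wi*Qc*Pd*Pg*Qe - 0*vv*wi*Qa*Pb*Pg*Pe + vv*ww*wi*Pc*Qd*Qg*Pe + vv*vi*Pd*Qd*Ph*Qh + vv*vi*Pb*Qb*Ph*Qh + vv*vi*Pa*Qa*Ph*Qh + vv*vi*ww*wi*Pd*Qd*Pe*Qe + vv*vi*ww*wi*Pc*Qc*Ph*Qh + vv*vi*ww*wi*Pb*Qb*Pe*Qe + vv*vi*ww*wi*Pa*Qa*Pe*Qe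 - vv*vi*vi*ww*Pa*Qb*Qg*Qe - vv*vv*vi*wi*Qa*Pb*Pg*Pe + vv*vv*vi*vi*ww*wi*Pd*Qd*Pe*Qe + vv*vv*vi*vi*ww*wi*Pc*Qc*Ph*Qh + vv*vv*vi*vi*ww*wi*Pb*Qb*Pe*Qe + vv*vv*vi*vi*ww*wi*Pa*Qa*Pe*Qe + vv*vv*vv*vi*vi*vi*ww*wi*Pb*Qb*Pe*Qe - ui*ww*Pa*Qd*Qf*Qg + ui*vi*ww*Pa*Qc*Qf*Qe - 0*ui*vv*ww*wi*Pb*Qd*Qf*Pe + ui*vv*vv*vi*ww*wi*Pb*Qd*Qf*Pe - ui*ui*vv*Qb*Qc*Qe*Ph + ui*ui*vv*ww*wi*Qb*Qc*Qe*Ph - ui*ui*vv*vv*wi*Qa*Qc*Pg*Ph + ui*ui*vv*vv*vi*ww*wi*Qb*Qc*Qe*Ph + ui*ui*vv*vv*vv*vi*vi*ww*wi*Qb*Qc*Qe*Ph + ui*ui*ui*vv*vv*ww*wi*Qc*Qd*Qf*Ph - uu*wi*Qa*Pd*Pf*Pg - 0*uu*vi*ww*wi*Qb*Pd*Pf*Qe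 + uu*vv*wi*Qa*Pc*Pf*Pe + uu*vv*vi*vi*ww*wi*Qb*Pd*Pf*Qe - uu*uu*vi*Pb*Pc*Pe*Qh + uu*uu*vi*ww*wi*Pb*Pc*Pe*Qh - uu*uu*vi*vi*ww*Pa*Pc*Qg*Qh + uu*uu*vv*vi*vi*ww*wi*Pb*Pc*Pe*Qh + uu*uu*vv*vv*vi*vi*vi*ww*wi*Pb*Pc*Pe*Qh + uu*uu*uu*vi*vi*ww*wi*Pc*Pd*Pf*Qh) * hy + (Pd*Qd*Pe*Qe + Pd*Qd*Pf*Qf + Pc*Qc*Ph*Qh + Pc*Qc*Pg*Qg + Pb*Qb*Pe*Qe + Pb*Qb*Pf*Qf + Pa*Qa*Pe*Qe + Pa*Qa*Pf*Qf + vi*Qc*Pd*Pg*Qe + vv*Pc*Qd*Qg*Pe - ui*Pb*Qc*Qf*Pg + ui*ui*vv*Qb*Qc*Qe*Ph + ui*ui*ui*vv*vv*Qc*Qd*Qf*Ph - uu*Qb*Pc*Pf*Qg + uu*uu*vi*Pb*Pc*Pe*Qh + uu*uu*uu*vi*vi*Pc*Pd*Pf*Qh) * hz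
    + (Pf*Qf + Pg*Qg + Pe*Qe + Ph*Qh) * hab + (C ((2 * (2 * n + 1) : ℕ) : ℤ)) * hef + hC



end
end

section
/- Yang multiplication theorem for base sequences: If BS(m+1, m) ≠ ∅ and BS(n+1, n) ≠ ∅, then BS(m', m') ≠ ∅ where m' = (2m+1)(2n+1). -/
noncomputable section
open LaurentPolynomial Finset

variable {R : Type*}

/-- Base sequences: four `±1`-sequences of lengths `p,p,q,q` whose non-periodic
autocorrelations sum to zero for every `j ≥ 1`. -/
def IsBaseSeq (p q : ℕ) (a b : Fin p → ℤ) (c d : Fin q → ℤ) : Prop :=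
  (∀ i, a i = 1 ∨ a i = -1) ∧ (∀ i, b i = 1 ∨ b i = -1) ∧
  (∀ i, c i = 1 ∨ c i = -1) ∧ (∀ i, d i = 1 ∨ d i = -1) ∧
  ∀ j : ℕ, 1 ≤ j →
    autocorr id a j + autocorr id b j + autocorr id c j + autocorr id d j = 0

namespace YangAux

abbrev LP := LaurentPolynomial ℤ

def lstarH : LP →+* LP := AddMonoidAlgebra.mapDomainRingHom ℤ (-AddMonoidHom.id ℤ)
def subN (t : ℤ) : LP →+* LP := AddMonoidAlgebra.mapDomainRingHom ℤ (t • AddMonoidHom.id ℤ)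

lemma lstarH_single (a r : ℤ) : lstarH (AddMonoidAlgebra.single a r) = AddMonoidAlgebra.single (-a) r := by
  show AddMonoidAlgebra.mapDomain (⇑(-AddMonoidHom.id ℤ)) (AddMonoidAlgebra.single a r) = _
  rw [AddMonoidAlgebra.mapDomain_single]; rfl

lemma subN_single (t a r : ℤ) : subN t (AddMonoidAlgebra.single a r) = AddMonoidAlgebra.single (t * a) r := by
  show AddMonoidAlgebra.mapDomain (⇑(t • AddMonoidHom.id ℤ)) (AddMonoidAlgebra.single a r) = _
  rw [AddMonoidAlgebra.mapDomain_single]; rfl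

lemma lstarH_invol (f : LP) : lstarH (lstarH f) = f := by
  induction f using AddMonoidAlgebra.induction_linear with
  | zero => simp
  | add a b ha hb => rw [map_add, map_add, ha, hb]
  | single a r => rw [lstarH_single, lstarH_single, neg_neg]

lemma lstarH_subN (t : ℤ) (f : LP) : lstarH (subN t f) = subN t (lstarH f) := by
  induction f using AddMonoidAlgebra.induction_linear with
  | zero => simp
  | add a b ha hb => rw [map_add, map_add, ha, hb, map_add, map_add]
  | single a r => rw [subN_single, lstarH_single, lstarH_single, subN_single, mul_neg]

lemma lstarH_apply (f : LP) (k : ℤ) : (lstarH f).coeff k = f.coeff (-k) := by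
  induction f using AddMonoidAlgebra.induction_linear with
  | zero => simp
  | add a b ha hb =>
      rw [map_add]
      rw [AddMonoidAlgebra.coeff_add, AddMonoidAlgebra.coeff_add, Finsupp.add_apply, Finsupp.add_apply, ha, hb]
  | single a r =>
      rw [lstarH_single, AddMonoidAlgebra.coeff_single, AddMonoidAlgebra.coeff_single, Finsupp.single_apply, Finsupp.single_apply]
      by_cases h : a = -k
      · rw [if_pos (by omega), if_pos (by omega)]
      · rw [if_neg (by omega), if_neg (by omega)]

lemma psi_def {l : ℕ} (u : Fin l → ℤ) :
    hallPsi u = ∑ i : Fin l, AddMonoidAlgebra.single (2 * (i : ℤ) + 1 - l) (u i) :=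
  Finset.sum_congr rfl fun i _ => (single_eq_C_mul_T _ _).symm

lemma psi_neg {l : ℕ} (u : Fin l → ℤ) : hallPsi (fun i => -(u i)) = -hallPsi u := by
  rw [psi_def, psi_def, ← Finset.sum_neg_distrib]
  exact Finset.sum_congr rfl fun i _ => AddMonoidAlgebra.single_neg _ _

lemma psi_rev {l : ℕ} (u : Fin l → ℤ) : hallPsi (revSeq id u) = lstarH (hallPsi u) := by
  rw [psi_def, psi_def, map_sum]
  apply Fintype.sum_equiv (Fin.revPerm)
  intro i
  rw [lstarH_single]
  have h1 : ((Fin.revPerm i : Fin l) : ℕ) = l - ((i : ℕ) + 1) := Fin.val_rev i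
  have h2 : (i:ℕ) < l := i.isLt
  have h3 : -(2 * ((Fin.revPerm i : Fin l) : ℤ) + 1 - l) = 2 * (i:ℤ) + 1 - l := by
    have h4 : (((Fin.revPerm i : Fin l) : ℕ) : ℤ) = (l : ℤ) - 1 - ((i:ℕ) : ℤ) := by omega
    rw [h4]; ring
  rw [h3]
  rfl


lemma sum_if_coe {l : ℕ} (c : ℕ) (f : Fin l → ℤ) :
    (∑ i : Fin l, if (i : ℕ) = c then f i else 0) =
      if h : c < l then f ⟨c, h⟩ else 0 := by
  by_cases h : c < l
  · rw [dif_pos h, Finset.sum_eq_single_of_mem ⟨c, h⟩ (Finset.mem_univ _)]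
    · rw [if_pos rfl]
    · intro i _ hne
      rw [if_neg (by simpa [Fin.ext_iff] using hne)]
  · rw [dif_neg h]
    apply Finset.sum_eq_zero
    intro i _
    rw [if_neg (by intro he; exact h (he ▸ i.isLt))]

lemma corr_expand {l : ℕ} (u v : Fin l → ℤ) (k : ℤ) :
    (hallPsi u * lstarH (hallPsi v)).coeff k =
      ∑ ip : Fin l, ∑ i : Fin l,
        if 2 * (i : ℤ) - 2 * (ip : ℤ) = k then u i * v ip else 0 := by
  rw [psi_def u, psi_def v, map_sum]
  simp only [lstarH_single]
  rw [Finset.sum_mul_sum]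
  rw [AddMonoidAlgebra.coeff_sum, Finset.sum_apply']
  rw [Finset.sum_comm]
  apply Finset.sum_congr rfl
  intro ip _
  rw [AddMonoidAlgebra.coeff_sum, Finset.sum_apply']
  apply Finset.sum_congr rfl
  intro i _
  rw [AddMonoidAlgebra.single_mul_single, AddMonoidAlgebra.coeff_single, Finsupp.single_apply]
  apply if_congr _ rfl rfl
  constructor <;> intro h <;> omega

lemma corr_apply {l : ℕ} (u v : Fin l → ℤ) (j : ℕ) :
    (hallPsi u * lstarH (hallPsi v)).coeff (2 * (j : ℤ)) =
      ∑ i : Fin l, if h : (i : ℕ) + j < l then u ⟨(i : ℕ) + j, h⟩ * v i else 0 := by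
  rw [corr_expand]
  apply Finset.sum_congr rfl
  intro ip _
  rw [show (∑ i : Fin l, if 2 * (i : ℤ) - 2 * (ip : ℤ) = 2 * (j:ℤ) then u i * v ip else 0)
      = ∑ i : Fin l, if (i : ℕ) = (ip : ℕ) + j then u i * v ip else 0 from
    Finset.sum_congr rfl fun i _ => if_congr (by constructor <;> intro h <;> omega) rfl rfl]
  rw [sum_if_coe]

lemma corr_odd {l : ℕ} (u v : Fin l → ℤ) (k : ℤ) (hk : ¬ (2 ∣ k)) :
    (hallPsi u * lstarH (hallPsi v)).coeff k = 0 := by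
  rw [corr_expand]
  apply Finset.sum_eq_zero; intro ip _
  apply Finset.sum_eq_zero; intro i _
  rw [if_neg]
  intro h
  exact hk ⟨(i : ℤ) - (ip : ℤ), by omega⟩

lemma lstar_norm {l : ℕ} (u : Fin l → ℤ) :
    lstarH (hallPsi u * lstarH (hallPsi u)) = hallPsi u * lstarH (hallPsi u) := by
  rw [map_mul, lstarH_invol, mul_comm]

lemma autocorr_corr {l : ℕ} (u : Fin l → ℤ) (j : ℕ) :
    (hallPsi u * lstarH (hallPsi u)).coeff (2 * (j : ℤ)) = autocorr id u j := by
  rw [corr_apply]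
  apply Finset.sum_congr rfl
  intro i _
  show _ = if h : (i : ℕ) + j < l then u i * id (u ⟨(i : ℕ) + j, h⟩) else 0
  split
  · simp [mul_comm]
  · rfl

lemma corr_zero {l : ℕ} (u : Fin l → ℤ) (hu : ∀ i, u i = 1 ∨ u i = -1) :
    (hallPsi u * lstarH (hallPsi u)).coeff 0 = l := by
  have h0 : (0:ℤ) = 2 * ((0:ℕ):ℤ) := by norm_num
  rw [h0, corr_apply]
  rw [show (∑ i : Fin l, if h : (i:ℕ) + 0 < l then u ⟨(i:ℕ)+0, h⟩ * u i else 0)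
      = ∑ _i : Fin l, (1:ℤ) from Finset.sum_congr rfl fun i _ => by
    rw [dif_pos (by simpa using i.isLt)]
    have : (⟨(i:ℕ)+0, by simpa using i.isLt⟩ : Fin l) = i := by
      apply Fin.ext; simp
    rw [this]
    rcases hu i with h | h <;> rw [h] <;> norm_num]
  simp [mul_comm]


lemma base_poly {l1 l2 : ℕ} (A B : Fin l1 → ℤ) (C D : Fin l2 → ℤ)
    (hA : ∀ i, A i = 1 ∨ A i = -1) (hB : ∀ i, B i = 1 ∨ B i = -1)
    (hC : ∀ i, C i = 1 ∨ C i = -1) (hD : ∀ i, D i = 1 ∨ D i = -1)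
    (hcorr : ∀ j : ℕ, 1 ≤ j →
      autocorr id A j + autocorr id B j + autocorr id C j + autocorr id D j = 0) :
    hallPsi A * lstarH (hallPsi A) + hallPsi B * lstarH (hallPsi B) +
      hallPsi C * lstarH (hallPsi C) + hallPsi D * lstarH (hallPsi D) =
      AddMonoidAlgebra.single (0:ℤ) (2 * (l1:ℤ) + 2 * (l2:ℤ)) := by
  set SS := hallPsi A * lstarH (hallPsi A) + hallPsi B * lstarH (hallPsi B) +
      hallPsi C * lstarH (hallPsi C) + hallPsi D * lstarH (hallPsi D) with hSS
  have happ : ∀ k : ℤ, SS.coeff k =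
      (hallPsi A * lstarH (hallPsi A)).coeff k + (hallPsi B * lstarH (hallPsi B)).coeff k +
      (hallPsi C * lstarH (hallPsi C)).coeff k + (hallPsi D * lstarH (hallPsi D)).coeff k := by
    intro k
    rfl
  have hsym : ∀ k : ℤ, SS.coeff (-k) = SS.coeff k := by
    intro k
    have h2 : lstarH SS = SS := by
      rw [hSS]
      simp only [map_add, lstar_norm]
    calc SS.coeff (-k) = (lstarH SS).coeff k := (lstarH_apply SS k).symm
    _ = SS.coeff k := by rw [h2]
  have hpos : ∀ k : ℤ, 0 < k → SS.coeff k = 0 := by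
    intro k hk
    rw [happ]
    by_cases h2 : (2:ℤ) ∣ k
    · obtain ⟨j, rfl⟩ := h2
      have hjn : 2 * j = 2 * ((j.toNat : ℕ) : ℤ) := by omega
      rw [hjn, autocorr_corr, autocorr_corr, autocorr_corr, autocorr_corr]
      exact hcorr j.toNat (by omega)
    · rw [corr_odd A A _ h2, corr_odd B B _ h2, corr_odd C C _ h2, corr_odd D D _ h2]
      ring
  apply LaurentPolynomial.ext; intro k
  rcases lt_trichotomy k 0 with hneg | rfl | hposk
  · have : SS.coeff k = 0 := by
      rw [show k = -(-k) by ring, hsym]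
      exact hpos (-k) (by omega)
    rw [this, AddMonoidAlgebra.coeff_single, Finsupp.single_apply, if_neg (by omega)]
  · rw [happ, corr_zero A hA, corr_zero B hB, corr_zero C hC, corr_zero D hD,
      AddMonoidAlgebra.coeff_single, Finsupp.single_apply, if_pos rfl]
    push_cast
    ring
  · rw [hpos k hposk, AddMonoidAlgebra.coeff_single, Finsupp.single_apply, if_neg (by omega)]


def ieq (m : ℕ) : (Fin (m+1) ⊕ Fin m) ≃ Fin (2*m+1) where
  toFun s := match s with
    | Sum.inl a => ⟨2*(a:ℕ), by have := a.isLt; omega⟩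
    | Sum.inr b => ⟨2*(b:ℕ)+1, by have := b.isLt; omega⟩
  invFun k := if h : (k:ℕ) % 2 = 0 then Sum.inl ⟨(k:ℕ)/2, by have := k.isLt; omega⟩
              else Sum.inr ⟨(k:ℕ)/2, by have := k.isLt; omega⟩
  left_inv := by
    rintro (a | b)
    · show (if h : (2*(a:ℕ)) % 2 = 0 then _ else _) = _
      rw [dif_pos (by omega)]
      congr 1
      apply Fin.ext
      show 2*(a:ℕ)/2 = a
      omega
    · show (if h : (2*(b:ℕ)+1) % 2 = 0 then _ else _) = _
      rw [dif_neg (by omega)]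
      congr 1
      apply Fin.ext
      show (2*(b:ℕ)+1)/2 = b
      omega
  right_inv := by
    intro k
    dsimp only
    by_cases h : (k:ℕ) % 2 = 0
    · rw [dif_pos h]
      apply Fin.ext
      show 2*((k:ℕ)/2) = (k:ℕ)
      omega
    · rw [dif_neg h]
      apply Fin.ext
      show 2*((k:ℕ)/2)+1 = (k:ℕ)
      omega

def peq (p w : ℕ) : Fin p × Fin (w+1) ≃ Fin (p * (w+1)) where
  toFun x := ⟨(x.1:ℕ) * (w+1) + (x.2:ℕ), by
    have h1 := x.1.isLt; have h2 := x.2.isLt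
    calc (x.1:ℕ) * (w+1) + (x.2:ℕ) < (x.1:ℕ) * (w+1) + (w+1) := by omega
    _ = ((x.1:ℕ)+1) * (w+1) := by ring
    _ ≤ p * (w+1) := Nat.mul_le_mul_right _ h1⟩
  invFun k := (⟨(k:ℕ)/(w+1), Nat.div_lt_of_lt_mul (Nat.mul_comm p (w+1) ▸ k.isLt)⟩,
               ⟨(k:ℕ) % (w+1), Nat.mod_lt _ (Nat.succ_pos w)⟩)
  left_inv := by
    rintro ⟨a, b⟩
    have hb := b.isLt
    have h1 : ((a:ℕ) * (w+1) + (b:ℕ))/(w+1) = a := by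
      rw [mul_comm, Nat.mul_add_div (Nat.succ_pos w), Nat.div_eq_of_lt hb, add_zero]
    have h2 : ((a:ℕ) * (w+1) + (b:ℕ)) % (w+1) = b := by
      rw [mul_comm, Nat.mul_add_mod, Nat.mod_eq_of_lt hb]
    show (⟨_, _⟩, ⟨_, _⟩) = (a, b)
    rw [Prod.mk.injEq]
    constructor
    · apply Fin.ext; exact h1
    · apply Fin.ext; exact h2
  right_inv := by
    intro k
    apply Fin.ext
    show ((k:ℕ)/(w+1)) * (w+1) + (k:ℕ) % (w+1) = k
    rw [mul_comm]
    exact Nat.div_add_mod _ _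

def ext1 {l : ℕ} (u : Fin l → ℤ) : ℕ → ℤ := fun a => if h : a < l then u ⟨a, h⟩ else 0

lemma ext1_coe {l : ℕ} (u : Fin l → ℤ) (i : Fin l) : ext1 u (i : ℕ) = u i := by
  rw [ext1, dif_pos i.isLt]

def quadSeq (m n : ℕ) (P0 P1 : Fin (m+1) → ℤ) (P2 P3 : Fin m → ℤ)
    (S0 : Fin (n+1) → ℤ) (S1 : Fin n → ℤ) (S2 : Fin (n+1) → ℤ) (S3 : Fin n → ℤ) :
    Fin ((2*m+1)*(2*n+1)) → ℤ := fun k =>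
  if ((k:ℕ)/(2*n+1)) % 2 = 0 then
    (if ((k:ℕ)%(2*n+1)) % 2 = 0 then
      ext1 P0 (((k:ℕ)/(2*n+1))/2) * ext1 S0 (((k:ℕ)%(2*n+1))/2)
    else
      ext1 P1 (((k:ℕ)/(2*n+1))/2) * ext1 S1 (((k:ℕ)%(2*n+1))/2))
  else
    (if ((k:ℕ)%(2*n+1)) % 2 = 0 then
      ext1 P2 (((k:ℕ)/(2*n+1))/2) * ext1 S2 (((k:ℕ)%(2*n+1))/2)
    else
      ext1 P3 (((k:ℕ)/(2*n+1))/2) * ext1 S3 (((k:ℕ)%(2*n+1))/2))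

lemma subN_psi_mul {l1 l2 : ℕ} (P : Fin l1 → ℤ) (S : Fin l2 → ℤ) (t : ℤ) :
    subN t (hallPsi P) * subN 2 (hallPsi S) =
      ∑ α : Fin l1, ∑ γ : Fin l2,
        AddMonoidAlgebra.single (t * (2*(α:ℤ)+1-l1) + 2*(2*(γ:ℤ)+1-l2)) (P α * S γ) := by
  rw [psi_def P, psi_def S, map_sum, map_sum]
  simp only [subN_single]
  rw [Finset.sum_mul_sum]
  apply Finset.sum_congr rfl; intro α _
  apply Finset.sum_congr rfl; intro γ _
  rw [AddMonoidAlgebra.single_mul_single]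


lemma psi_quadSeq (m n : ℕ) (P0 P1 : Fin (m+1) → ℤ) (P2 P3 : Fin m → ℤ)
    (S0 : Fin (n+1) → ℤ) (S1 : Fin n → ℤ) (S2 : Fin (n+1) → ℤ) (S3 : Fin n → ℤ) :
    hallPsi (quadSeq m n P0 P1 P2 P3 S0 S1 S2 S3) =
      subN (2*(2*(n:ℤ)+1)) (hallPsi P0) * subN 2 (hallPsi S0)
    + subN (2*(2*(n:ℤ)+1)) (hallPsi P1) * subN 2 (hallPsi S1)
    + subN (2*(2*(n:ℤ)+1)) (hallPsi P2) * subN 2 (hallPsi S2)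
    + subN (2*(2*(n:ℤ)+1)) (hallPsi P3) * subN 2 (hallPsi S3) := by
  set Q := quadSeq m n P0 P1 P2 P3 S0 S1 S2 S3 with hQ
  set E := (((ieq m).prodCongr (ieq n)).trans (peq (2*m+1) (2*n))) with hE
  rw [psi_def, ← Equiv.sum_comp E
    (fun k => AddMonoidAlgebra.single (2*(k:ℤ)+1 - (((2*m+1)*(2*n+1) : ℕ) : ℤ)) (Q k))]
  rw [Fintype.sum_prod_type]
  simp only [Fintype.sum_sum_type]
  rw [Finset.sum_add_distrib, Finset.sum_add_distrib]
  have h00 : (∑ x : Fin (m+1), ∑ y : Fin (n+1),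
      AddMonoidAlgebra.single (2 * ((E (Sum.inl x, Sum.inl y) : Fin ((2*m+1)*(2*n+1))) : ℤ) + 1
        - (((2*m+1)*(2*n+1) : ℕ) : ℤ)) (Q (E (Sum.inl x, Sum.inl y))))
      = subN (2*(2*(n:ℤ)+1)) (hallPsi P0) * subN 2 (hallPsi S0) := by
    rw [subN_psi_mul]
    apply Finset.sum_congr rfl; intro α _
    apply Finset.sum_congr rfl; intro γ _
    have hα := α.isLt; have hγ := γ.isLt
    have hv : ((E (Sum.inl α, Sum.inl γ) : Fin ((2*m+1)*(2*n+1))) : ℕ)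
        = 2*(α:ℕ)*(2*n+1) + 2*(γ:ℕ) := rfl
    have hd : (2*(α:ℕ)*(2*n+1) + 2*(γ:ℕ))/(2*n+1) = 2*(α:ℕ) := by
      rw [mul_comm (2*(α:ℕ)) (2*n+1), Nat.mul_add_div (Nat.succ_pos _),
        Nat.div_eq_of_lt (by omega), add_zero]
    have hm2 : (2*(α:ℕ)*(2*n+1) + 2*(γ:ℕ)) % (2*n+1) = 2*(γ:ℕ) := by
      rw [mul_comm (2*(α:ℕ)) (2*n+1), Nat.mul_add_mod, Nat.mod_eq_of_lt (by omega)]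
    congr 1
    · rw [hv]; push_cast; ring
    · rw [hQ]
      simp only [quadSeq, hv, hd, hm2]
      rw [if_pos (by omega : 2*(α:ℕ) % 2 = 0), if_pos (by omega : 2*(γ:ℕ) % 2 = 0),
        (by omega : 2*(α:ℕ)/2 = (α:ℕ)), (by omega : 2*(γ:ℕ)/2 = (γ:ℕ)),
        ext1_coe, ext1_coe]
  have h01 : (∑ x : Fin (m+1), ∑ y : Fin n,
      AddMonoidAlgebra.single (2 * ((E (Sum.inl x, Sum.inr y) : Fin ((2*m+1)*(2*n+1))) : ℤ) + 1
        - (((2*m+1)*(2*n+1) : ℕ) : ℤ)) (Q (E (Sum.inl x, Sum.inr y))))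
      = subN (2*(2*(n:ℤ)+1)) (hallPsi P1) * subN 2 (hallPsi S1) := by
    rw [subN_psi_mul]
    apply Finset.sum_congr rfl; intro α _
    apply Finset.sum_congr rfl; intro γ _
    have hα := α.isLt; have hγ := γ.isLt
    have hv : ((E (Sum.inl α, Sum.inr γ) : Fin ((2*m+1)*(2*n+1))) : ℕ)
        = 2*(α:ℕ)*(2*n+1) + (2*(γ:ℕ)+1) := rfl
    have hd : (2*(α:ℕ)*(2*n+1) + (2*(γ:ℕ)+1))/(2*n+1) = 2*(α:ℕ) := by
      rw [mul_comm (2*(α:ℕ)) (2*n+1), Nat.mul_add_div (Nat.succ_pos _),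
        Nat.div_eq_of_lt (by omega), add_zero]
    have hm2 : (2*(α:ℕ)*(2*n+1) + (2*(γ:ℕ)+1)) % (2*n+1) = 2*(γ:ℕ)+1 := by
      rw [mul_comm (2*(α:ℕ)) (2*n+1), Nat.mul_add_mod, Nat.mod_eq_of_lt (by omega)]
    congr 1
    · rw [hv]; push_cast; ring
    · rw [hQ]
      simp only [quadSeq, hv, hd, hm2]
      rw [if_pos (by omega : 2*(α:ℕ) % 2 = 0), if_neg (by omega : ¬((2*(γ:ℕ)+1) % 2 = 0)),
        (by omega : 2*(α:ℕ)/2 = (α:ℕ)), (by omega : (2*(γ:ℕ)+1)/2 = (γ:ℕ)),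
        ext1_coe, ext1_coe]
  have h10 : (∑ x : Fin m, ∑ y : Fin (n+1),
      AddMonoidAlgebra.single (2 * ((E (Sum.inr x, Sum.inl y) : Fin ((2*m+1)*(2*n+1))) : ℤ) + 1
        - (((2*m+1)*(2*n+1) : ℕ) : ℤ)) (Q (E (Sum.inr x, Sum.inl y))))
      = subN (2*(2*(n:ℤ)+1)) (hallPsi P2) * subN 2 (hallPsi S2) := by
    rw [subN_psi_mul]
    apply Finset.sum_congr rfl; intro α _
    apply Finset.sum_congr rfl; intro γ _
    have hα := α.isLt; have hγ := γ.isLt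
    have hv : ((E (Sum.inr α, Sum.inl γ) : Fin ((2*m+1)*(2*n+1))) : ℕ)
        = (2*(α:ℕ)+1)*(2*n+1) + 2*(γ:ℕ) := rfl
    have hd : ((2*(α:ℕ)+1)*(2*n+1) + 2*(γ:ℕ))/(2*n+1) = 2*(α:ℕ)+1 := by
      rw [mul_comm (2*(α:ℕ)+1) (2*n+1), Nat.mul_add_div (Nat.succ_pos _),
        Nat.div_eq_of_lt (by omega), add_zero]
    have hm2 : ((2*(α:ℕ)+1)*(2*n+1) + 2*(γ:ℕ)) % (2*n+1) = 2*(γ:ℕ) := by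
      rw [mul_comm (2*(α:ℕ)+1) (2*n+1), Nat.mul_add_mod, Nat.mod_eq_of_lt (by omega)]
    congr 1
    · rw [hv]; push_cast; ring
    · rw [hQ]
      simp only [quadSeq, hv, hd, hm2]
      rw [if_neg (by omega : ¬((2*(α:ℕ)+1) % 2 = 0)), if_pos (by omega : 2*(γ:ℕ) % 2 = 0),
        (by omega : (2*(α:ℕ)+1)/2 = (α:ℕ)), (by omega : 2*(γ:ℕ)/2 = (γ:ℕ)),
        ext1_coe, ext1_coe]
  have h11 : (∑ x : Fin m, ∑ y : Fin n,
      AddMonoidAlgebra.single (2 * ((E (Sum.inr x, Sum.inr y) : Fin ((2*m+1)*(2*n+1))) : ℤ) + 1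
        - (((2*m+1)*(2*n+1) : ℕ) : ℤ)) (Q (E (Sum.inr x, Sum.inr y))))
      = subN (2*(2*(n:ℤ)+1)) (hallPsi P3) * subN 2 (hallPsi S3) := by
    rw [subN_psi_mul]
    apply Finset.sum_congr rfl; intro α _
    apply Finset.sum_congr rfl; intro γ _
    have hα := α.isLt; have hγ := γ.isLt
    have hv : ((E (Sum.inr α, Sum.inr γ) : Fin ((2*m+1)*(2*n+1))) : ℕ)
        = (2*(α:ℕ)+1)*(2*n+1) + (2*(γ:ℕ)+1) := rfl
    have hd : ((2*(α:ℕ)+1)*(2*n+1) + (2*(γ:ℕ)+1))/(2*n+1) = 2*(α:ℕ)+1 := by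
      rw [mul_comm (2*(α:ℕ)+1) (2*n+1), Nat.mul_add_div (Nat.succ_pos _),
        Nat.div_eq_of_lt (by omega), add_zero]
    have hm2 : ((2*(α:ℕ)+1)*(2*n+1) + (2*(γ:ℕ)+1)) % (2*n+1) = 2*(γ:ℕ)+1 := by
      rw [mul_comm (2*(α:ℕ)+1) (2*n+1), Nat.mul_add_mod, Nat.mod_eq_of_lt (by omega)]
    congr 1
    · rw [hv]; push_cast; ring
    · rw [hQ]
      simp only [quadSeq, hv, hd, hm2]
      rw [if_neg (by omega : ¬((2*(α:ℕ)+1) % 2 = 0)), if_neg (by omega : ¬((2*(γ:ℕ)+1) % 2 = 0)),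
        (by omega : (2*(α:ℕ)+1)/2 = (α:ℕ)), (by omega : (2*(γ:ℕ)+1)/2 = (γ:ℕ)),
        ext1_coe, ext1_coe]
  rw [h00, h01, h10, h11]
  ring


lemma pm_mul {x y : ℤ} (hx : x = 1 ∨ x = -1) (hy : y = 1 ∨ y = -1) :
    x * y = 1 ∨ x * y = -1 := by
  rcases hx with rfl | rfl <;> rcases hy with rfl | rfl <;> norm_num

lemma pm_rev {l : ℕ} {u : Fin l → ℤ} (hu : ∀ i, u i = 1 ∨ u i = -1) :
    ∀ i, revSeq id u i = 1 ∨ revSeq id u i = -1 := fun i => hu i.rev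

lemma pm_neg {l : ℕ} {u : Fin l → ℤ} (hu : ∀ i, u i = 1 ∨ u i = -1) :
    ∀ i, -(u i) = 1 ∨ -(u i) = -1 := by
  intro i; rcases hu i with h | h <;> rw [h] <;> norm_num

lemma quadSeq_pm1 (m n : ℕ) (P0 P1 : Fin (m+1) → ℤ) (P2 P3 : Fin m → ℤ)
    (S0 : Fin (n+1) → ℤ) (S1 : Fin n → ℤ) (S2 : Fin (n+1) → ℤ) (S3 : Fin n → ℤ)
    (h0 : ∀ i, P0 i = 1 ∨ P0 i = -1) (h1 : ∀ i, P1 i = 1 ∨ P1 i = -1)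
    (h2 : ∀ i, P2 i = 1 ∨ P2 i = -1) (h3 : ∀ i, P3 i = 1 ∨ P3 i = -1)
    (g0 : ∀ i, S0 i = 1 ∨ S0 i = -1) (g1 : ∀ i, S1 i = 1 ∨ S1 i = -1)
    (g2 : ∀ i, S2 i = 1 ∨ S2 i = -1) (g3 : ∀ i, S3 i = 1 ∨ S3 i = -1) :
    ∀ k, quadSeq m n P0 P1 P2 P3 S0 S1 S2 S3 k = 1 ∨
         quadSeq m n P0 P1 P2 P3 S0 S1 S2 S3 k = -1 := by
  intro k
  have hk : (k:ℕ) < (2*m+1)*(2*n+1) := k.isLt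
  have hdiv : (k:ℕ)/(2*n+1) < 2*m+1 := Nat.div_lt_of_lt_mul (Nat.mul_comm (2*m+1) (2*n+1) ▸ hk)
  have hmod : (k:ℕ)%(2*n+1) < 2*n+1 := Nat.mod_lt _ (by omega)
  simp only [quadSeq]
  split_ifs with ha hb hb
  · simp only [ext1]
    rw [dif_pos (by omega), dif_pos (by omega)]
    exact pm_mul (h0 _) (g0 _)
  · simp only [ext1]
    rw [dif_pos (by omega), dif_pos (by omega)]
    exact pm_mul (h1 _) (g1 _)
  · simp only [ext1]
    rw [dif_pos (by omega), dif_pos (by omega)]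
    exact pm_mul (h2 _) (g2 _)
  · simp only [ext1]
    rw [dif_pos (by omega), dif_pos (by omega)]
    exact pm_mul (h3 _) (g3 _)

end YangAux

/-- Yang multiplication theorem — if `BS(m+1,m) ≠ ∅` and `BS(n+1,n) ≠ ∅`
then `BS(m',m') ≠ ∅` where `m' = (2m+1)(2n+1)`. -/
theorem stmt15 (m n : ℕ)
    (hBS1 : ∃ (a b : Fin (m + 1) → ℤ) (c d : Fin m → ℤ), IsBaseSeq (m + 1) m a b c d)
    (hBS2 : ∃ (a b : Fin (n + 1) → ℤ) (c d : Fin n → ℤ), IsBaseSeq (n + 1) n a b c d) :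
    ∃ (q r : Fin ((2 * m + 1) * (2 * n + 1)) → ℤ)
      (s t : Fin ((2 * m + 1) * (2 * n + 1)) → ℤ),
      IsBaseSeq ((2 * m + 1) * (2 * n + 1)) ((2 * m + 1) * (2 * n + 1)) q r s t := by
  obtain ⟨A, B, C1, D1, hbs1⟩ := hBS1
  obtain ⟨E1, F1, G1, H1, hbs2⟩ := hBS2
  obtain ⟨hA, hB, hC, hD, hcorr1⟩ := hbs1
  obtain ⟨hE, hF, hG, hH, hcorr2⟩ := hbs2
  refine ⟨
    YangAux.quadSeq m n A B C1 (revSeq id D1)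
      E1 G1 (fun γ => -(revSeq id F1 γ)) (fun γ => -(revSeq id H1 γ)),
    YangAux.quadSeq m n B (revSeq id A) D1 C1
      F1 (fun γ => -(revSeq id H1 γ)) (fun γ => -(E1 γ)) (revSeq id G1),
    YangAux.quadSeq m n (revSeq id B) (revSeq id A) (revSeq id D1) C1
      E1 (fun γ => -(G1 γ)) F1 (fun γ => -(H1 γ)),
    YangAux.quadSeq m n (revSeq id A) B (revSeq id C1) (revSeq id D1)
      (revSeq id F1) H1 E1 (revSeq id G1),
    ?_, ?_, ?_, ?_, ?_⟩
  · exact YangAux.quadSeq_pm1 m n _ _ _ _ _ _ _ _ hA hB hC (YangAux.pm_rev hD)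
      hE hG (YangAux.pm_neg (YangAux.pm_rev hF)) (YangAux.pm_neg (YangAux.pm_rev hH))
  · exact YangAux.quadSeq_pm1 m n _ _ _ _ _ _ _ _ hB (YangAux.pm_rev hA) hD hC
      hF (YangAux.pm_neg (YangAux.pm_rev hH)) (YangAux.pm_neg hE) (YangAux.pm_rev hG)
  · exact YangAux.quadSeq_pm1 m n _ _ _ _ _ _ _ _ (YangAux.pm_rev hB) (YangAux.pm_rev hA)
      (YangAux.pm_rev hD) hC hE (YangAux.pm_neg hG) hF (YangAux.pm_neg hH)
  · exact YangAux.quadSeq_pm1 m n _ _ _ _ _ _ _ _ (YangAux.pm_rev hA) hB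
      (YangAux.pm_rev hC) (YangAux.pm_rev hD) (YangAux.pm_rev hF) hH hE (YangAux.pm_rev hG)
  · -- the autocorrelation identity
    intro j hj
    have hψ0 : hallPsi (YangAux.quadSeq m n A B C1 (revSeq id D1)
        E1 G1 (fun γ => -(revSeq id F1 γ)) (fun γ => -(revSeq id H1 γ))) =
        YangAux.subN (2*(2*(n:ℤ)+1)) (hallPsi A) * YangAux.subN 2 (hallPsi E1)
        + YangAux.subN (2*(2*(n:ℤ)+1)) (hallPsi B) * YangAux.subN 2 (hallPsi G1)
        - YangAux.subN (2*(2*(n:ℤ)+1)) (hallPsi C1) * YangAux.lstarH (YangAux.subN 2 (hallPsi F1))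
        - YangAux.lstarH (YangAux.subN (2*(2*(n:ℤ)+1)) (hallPsi D1))
            * YangAux.lstarH (YangAux.subN 2 (hallPsi H1)) := by
      rw [YangAux.psi_quadSeq, YangAux.psi_neg (revSeq id F1), YangAux.psi_neg (revSeq id H1),
        YangAux.psi_rev F1, YangAux.psi_rev H1, YangAux.psi_rev D1,
        map_neg, map_neg, ← YangAux.lstarH_subN, ← YangAux.lstarH_subN, ← YangAux.lstarH_subN]
      ring
    have hψ1 : hallPsi (YangAux.quadSeq m n B (revSeq id A) D1 C1
        F1 (fun γ => -(revSeq id H1 γ)) (fun γ => -(E1 γ)) (revSeq id G1)) =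
        YangAux.subN (2*(2*(n:ℤ)+1)) (hallPsi B) * YangAux.subN 2 (hallPsi F1)
        - YangAux.lstarH (YangAux.subN (2*(2*(n:ℤ)+1)) (hallPsi A))
            * YangAux.lstarH (YangAux.subN 2 (hallPsi H1))
        - YangAux.subN (2*(2*(n:ℤ)+1)) (hallPsi D1) * YangAux.subN 2 (hallPsi E1)
        + YangAux.subN (2*(2*(n:ℤ)+1)) (hallPsi C1) * YangAux.lstarH (YangAux.subN 2 (hallPsi G1)) := by
      rw [YangAux.psi_quadSeq, YangAux.psi_neg (revSeq id H1), YangAux.psi_neg E1,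
        YangAux.psi_rev H1, YangAux.psi_rev A, YangAux.psi_rev G1,
        map_neg, map_neg, ← YangAux.lstarH_subN, ← YangAux.lstarH_subN, ← YangAux.lstarH_subN]
      ring
    have hψ2 : hallPsi (YangAux.quadSeq m n (revSeq id B) (revSeq id A) (revSeq id D1) C1
        E1 (fun γ => -(G1 γ)) F1 (fun γ => -(H1 γ))) =
        YangAux.lstarH (YangAux.subN (2*(2*(n:ℤ)+1)) (hallPsi B)) * YangAux.subN 2 (hallPsi E1)
        - YangAux.lstarH (YangAux.subN (2*(2*(n:ℤ)+1)) (hallPsi A)) * YangAux.subN 2 (hallPsi G1)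
        + YangAux.lstarH (YangAux.subN (2*(2*(n:ℤ)+1)) (hallPsi D1)) * YangAux.subN 2 (hallPsi F1)
        - YangAux.subN (2*(2*(n:ℤ)+1)) (hallPsi C1) * YangAux.subN 2 (hallPsi H1) := by
      rw [YangAux.psi_quadSeq, YangAux.psi_neg G1, YangAux.psi_neg H1,
        YangAux.psi_rev B, YangAux.psi_rev A, YangAux.psi_rev D1,
        map_neg, map_neg, ← YangAux.lstarH_subN, ← YangAux.lstarH_subN, ← YangAux.lstarH_subN]
      ring
    have hψ3 : hallPsi (YangAux.quadSeq m n (revSeq id A) B (revSeq id C1) (revSeq id D1)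
        (revSeq id F1) H1 E1 (revSeq id G1)) =
        YangAux.lstarH (YangAux.subN (2*(2*(n:ℤ)+1)) (hallPsi A))
            * YangAux.lstarH (YangAux.subN 2 (hallPsi F1))
        + YangAux.subN (2*(2*(n:ℤ)+1)) (hallPsi B) * YangAux.subN 2 (hallPsi H1)
        + YangAux.lstarH (YangAux.subN (2*(2*(n:ℤ)+1)) (hallPsi C1)) * YangAux.subN 2 (hallPsi E1)
        + YangAux.lstarH (YangAux.subN (2*(2*(n:ℤ)+1)) (hallPsi D1))
            * YangAux.lstarH (YangAux.subN 2 (hallPsi G1)) := by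
      rw [YangAux.psi_quadSeq, YangAux.psi_rev F1, YangAux.psi_rev A, YangAux.psi_rev C1,
        YangAux.psi_rev D1, YangAux.psi_rev G1,
        ← YangAux.lstarH_subN, ← YangAux.lstarH_subN, ← YangAux.lstarH_subN,
        ← YangAux.lstarH_subN, ← YangAux.lstarH_subN]
    set Q0 := YangAux.quadSeq m n A B C1 (revSeq id D1)
        E1 G1 (fun γ => -(revSeq id F1 γ)) (fun γ => -(revSeq id H1 γ)) with hQ0
    set Q1 := YangAux.quadSeq m n B (revSeq id A) D1 C1
        F1 (fun γ => -(revSeq id H1 γ)) (fun γ => -(E1 γ)) (revSeq id G1) with hQ1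
    set Q2 := YangAux.quadSeq m n (revSeq id B) (revSeq id A) (revSeq id D1) C1
        E1 (fun γ => -(G1 γ)) F1 (fun γ => -(H1 γ)) with hQ2
    set Q3 := YangAux.quadSeq m n (revSeq id A) B (revSeq id C1) (revSeq id D1)
        (revSeq id F1) H1 E1 (revSeq id G1) with hQ3
    have hkey : hallPsi Q0 * YangAux.lstarH (hallPsi Q0)
        + hallPsi Q1 * YangAux.lstarH (hallPsi Q1)
        + hallPsi Q2 * YangAux.lstarH (hallPsi Q2)
        + hallPsi Q3 * YangAux.lstarH (hallPsi Q3) =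
        (YangAux.subN (2*(2*(n:ℤ)+1)) (hallPsi A)
            * YangAux.lstarH (YangAux.subN (2*(2*(n:ℤ)+1)) (hallPsi A))
          + YangAux.subN (2*(2*(n:ℤ)+1)) (hallPsi B)
            * YangAux.lstarH (YangAux.subN (2*(2*(n:ℤ)+1)) (hallPsi B))
          + YangAux.subN (2*(2*(n:ℤ)+1)) (hallPsi C1)
            * YangAux.lstarH (YangAux.subN (2*(2*(n:ℤ)+1)) (hallPsi C1))
          + YangAux.subN (2*(2*(n:ℤ)+1)) (hallPsi D1)
            * YangAux.lstarH (YangAux.subN (2*(2*(n:ℤ)+1)) (hallPsi D1))) *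
        (YangAux.subN 2 (hallPsi E1) * YangAux.lstarH (YangAux.subN 2 (hallPsi E1))
          + YangAux.subN 2 (hallPsi F1) * YangAux.lstarH (YangAux.subN 2 (hallPsi F1))
          + YangAux.subN 2 (hallPsi G1) * YangAux.lstarH (YangAux.subN 2 (hallPsi G1))
          + YangAux.subN 2 (hallPsi H1) * YangAux.lstarH (YangAux.subN 2 (hallPsi H1))) := by
      rw [hψ0, hψ1, hψ2, hψ3]
      simp only [map_add, map_sub, map_mul, map_neg, YangAux.lstarH_invol]
      ring
    have hP : YangAux.subN (2*(2*(n:ℤ)+1)) (hallPsi A)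
            * YangAux.lstarH (YangAux.subN (2*(2*(n:ℤ)+1)) (hallPsi A))
          + YangAux.subN (2*(2*(n:ℤ)+1)) (hallPsi B)
            * YangAux.lstarH (YangAux.subN (2*(2*(n:ℤ)+1)) (hallPsi B))
          + YangAux.subN (2*(2*(n:ℤ)+1)) (hallPsi C1)
            * YangAux.lstarH (YangAux.subN (2*(2*(n:ℤ)+1)) (hallPsi C1))
          + YangAux.subN (2*(2*(n:ℤ)+1)) (hallPsi D1)
            * YangAux.lstarH (YangAux.subN (2*(2*(n:ℤ)+1)) (hallPsi D1))
        = AddMonoidAlgebra.single (0:ℤ) (2 * ((m+1:ℕ):ℤ) + 2 * ((m:ℕ):ℤ)) := by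
      rw [YangAux.lstarH_subN, YangAux.lstarH_subN, YangAux.lstarH_subN,
        YangAux.lstarH_subN, ← map_mul, ← map_mul, ← map_mul, ← map_mul,
        ← map_add, ← map_add, ← map_add,
        YangAux.base_poly A B C1 D1 hA hB hC hD hcorr1, YangAux.subN_single, mul_zero]
    have hS : YangAux.subN 2 (hallPsi E1) * YangAux.lstarH (YangAux.subN 2 (hallPsi E1))
          + YangAux.subN 2 (hallPsi F1) * YangAux.lstarH (YangAux.subN 2 (hallPsi F1))
          + YangAux.subN 2 (hallPsi G1) * YangAux.lstarH (YangAux.subN 2 (hallPsi G1))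
          + YangAux.subN 2 (hallPsi H1) * YangAux.lstarH (YangAux.subN 2 (hallPsi H1))
        = AddMonoidAlgebra.single (0:ℤ) (2 * ((n+1:ℕ):ℤ) + 2 * ((n:ℕ):ℤ)) := by
      rw [YangAux.lstarH_subN, YangAux.lstarH_subN, YangAux.lstarH_subN,
        YangAux.lstarH_subN, ← map_mul, ← map_mul, ← map_mul, ← map_mul,
        ← map_add, ← map_add, ← map_add,
        YangAux.base_poly E1 F1 G1 H1 hE hF hG hH hcorr2, YangAux.subN_single, mul_zero]
    have htot : hallPsi Q0 * YangAux.lstarH (hallPsi Q0)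
        + hallPsi Q1 * YangAux.lstarH (hallPsi Q1)
        + hallPsi Q2 * YangAux.lstarH (hallPsi Q2)
        + hallPsi Q3 * YangAux.lstarH (hallPsi Q3)
        = AddMonoidAlgebra.single (0:ℤ) ((2 * ((m+1:ℕ):ℤ) + 2 * ((m:ℕ):ℤ))
            * (2 * ((n+1:ℕ):ℤ) + 2 * ((n:ℕ):ℤ))) := by
      rw [hkey, hP, hS, AddMonoidAlgebra.single_mul_single, add_zero]
    have h5 : (hallPsi Q0 * YangAux.lstarH (hallPsi Q0)
        + hallPsi Q1 * YangAux.lstarH (hallPsi Q1)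
        + hallPsi Q2 * YangAux.lstarH (hallPsi Q2)
        + hallPsi Q3 * YangAux.lstarH (hallPsi Q3)).coeff (2*(j:ℤ)) = 0 := by
      rw [htot, AddMonoidAlgebra.coeff_single, Finsupp.single_apply, if_neg (by omega)]
    have h6 : (hallPsi Q0 * YangAux.lstarH (hallPsi Q0)
        + hallPsi Q1 * YangAux.lstarH (hallPsi Q1)
        + hallPsi Q2 * YangAux.lstarH (hallPsi Q2)
        + hallPsi Q3 * YangAux.lstarH (hallPsi Q3)).coeff (2*(j:ℤ))
        = (hallPsi Q0 * YangAux.lstarH (hallPsi Q0)).coeff (2*(j:ℤ))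
        + (hallPsi Q1 * YangAux.lstarH (hallPsi Q1)).coeff (2*(j:ℤ))
        + (hallPsi Q2 * YangAux.lstarH (hallPsi Q2)).coeff (2*(j:ℤ))
        + (hallPsi Q3 * YangAux.lstarH (hallPsi Q3)).coeff (2*(j:ℤ)) := rfl
    rw [h6, YangAux.autocorr_corr, YangAux.autocorr_corr, YangAux.autocorr_corr,
      YangAux.autocorr_corr] at h5
    exact h5


end
end
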